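/- arXiv:1505.06113 — 10 statements merged into one kernel-verified Lean document; each statement's English description precedes it below -/
import Mathlib

section
/- Let n be an even positive integer with 2^q exactly dividing n (q ≥ 1), let G = Z/nZ be cyclic of order n generated by e, and let w_0, w_1, ..., w_{n-1} be integers all congruent to a fixed odd integer x modulo 2^q. Then the weighted sum ∑_{i=0}^{n-1} w_i·(i·e) is nonzero in G. -/
theorem stmt_0 (n q : ℕ) (hn : 0 < n) (hq : 1 ≤ q)
    (hdvd : 2 ^ q ∣ n) (hndvd : ¬ 2 ^ (q + 1) ∣ n)
    (x : ℤ) (hx : Odd x) (w : ℕ → ℤ)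
    (hw : ∀ i < n, (2 ^ q : ℤ) ∣ (w i - x)) :
    ¬ ((n : ℤ) ∣ ∑ i ∈ Finset.range n, w i * i) := by
  intro h
  -- n = 2^q * m with m odd
  obtain ⟨m, hm⟩ := hdvd
  have hmodd : Odd m := by
    rcases Nat.even_or_odd m with he | ho
    · exfalso; apply hndvd
      obtain ⟨k, hk⟩ := he
      exact ⟨k, by rw [hm, hk]; ring⟩
    · exact ho
  -- 2^q ∣ the sum
  have h1 : ((2 : ℤ) ^ q) ∣ ∑ i ∈ Finset.range n, w i * i := by
    refine dvd_trans ?_ h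
    exact_mod_cast Int.natCast_dvd_natCast.mpr ⟨m, hm⟩
  -- 2^q ∣ sum (w i - x) * i
  have h2 : ((2 : ℤ) ^ q) ∣ ∑ i ∈ Finset.range n, (w i - x) * i := by
    apply Finset.dvd_sum
    intro i hi
    exact Dvd.dvd.mul_right (hw i (Finset.mem_range.mp hi)) _
  -- hence 2^q ∣ x * T where T = ∑ i
  have h3 : ((2 : ℤ) ^ q) ∣ x * ∑ i ∈ Finset.range n, (i : ℤ) := by
    have : x * ∑ i ∈ Finset.range n, (i : ℤ) =
        (∑ i ∈ Finset.range n, w i * i) - ∑ i ∈ Finset.range n, (w i - x) * i := by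
      rw [Finset.mul_sum, ← Finset.sum_sub_distrib]
      apply Finset.sum_congr rfl
      intro i _
      ring
    rw [this]
    exact dvd_sub h1 h2
  -- T * 2 = n * (n-1)
  have hT : (∑ i ∈ Finset.range n, (i : ℤ)) * 2 = (n : ℤ) * (n - 1) := by
    have := Finset.sum_range_id_mul_two n
    have h' : ((∑ i ∈ Finset.range n, i) * 2 : ℕ) = n * (n - 1) := this
    have : ((∑ i ∈ Finset.range n, (i:ℤ)) * 2) = ((n * (n-1) : ℕ) : ℤ) := by
      push_cast [← h']
      ring
    rw [this]
    push_cast [Nat.cast_sub hn]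
    ring
  have h4 : ((2 : ℤ) ^ (q + 1)) ∣ x * ((n : ℤ) * (n - 1)) := by
    rw [← hT]
    rw [pow_succ]
    rw [show x * ((∑ i ∈ Finset.range n, (i:ℤ)) * 2) = (x * ∑ i ∈ Finset.range n, (i:ℤ)) * 2 by ring]
    exact mul_dvd_mul h3 dvd_rfl
  -- substitute n = 2^q * m
  have h5 : (2 : ℤ) ∣ x * (m * ((n : ℤ) - 1)) := by
    have hn' : (n : ℤ) = 2 ^ q * m := by exact_mod_cast hm
    rw [hn', pow_succ] at h4
    have := h4
    rw [show x * (2 ^ q * (m : ℤ) * (2 ^ q * m - 1)) =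
        2 ^ q * (x * (m * (2 ^ q * m - 1))) by ring] at this
    have h6 : (2 : ℤ) ∣ x * ((m : ℤ) * (2 ^ q * m - 1)) := by
      rcases this with ⟨c, hc⟩
      refine ⟨c, ?_⟩
      have hp : (0:ℤ) < 2 ^ q := by positivity
      have := mul_left_cancel₀ (ne_of_gt hp) (by linarith [hc] : (2:ℤ)^q * (x * ((m : ℤ) * (2 ^ q * m - 1))) = 2 ^ q * (2 * c))
      linarith
    rwa [hn']
  -- but x, m, n-1 are odd
  have hnodd : Odd ((n : ℤ) - 1) := by
    have h2n : 2 ∣ n := dvd_trans (dvd_pow_self 2 (by omega)) ⟨m, hm⟩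
    obtain ⟨k, hk⟩ := h2n
    exact ⟨k - 1, by push_cast [hk]; ring⟩
  have : Odd (x * ((m : ℤ) * ((n : ℤ) - 1))) :=
    hx.mul ((Int.odd_coe_nat m |>.mpr hmodd).mul hnodd)
  rw [Int.odd_iff] at this
  omega
end

section
/- Let n be a positive integer. The plus-minus weighted Harborth constant of the cyclic group C_n equals n+1 if n ≡ 2 (mod 4), and equals n otherwise (for n ≥ 1 with appropriate convention). -/
open Finset

lemma sum_val_eq (n : ℕ) [NeZero n] :
    ∑ g : ZMod n, g.val = ∑ i ∈ Finset.range n, i := by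
  refine Finset.sum_bij' (fun g _ => g.val) (fun i _ => (i : ZMod n)) ?_ ?_ ?_ ?_ ?_
  · intro g _; exact Finset.mem_range.2 (ZMod.val_lt g)
  · intro i _; exact Finset.mem_univ _
  · intro g _; exact ZMod.natCast_zmod_val g
  · intro i hi; exact ZMod.val_cast_of_lt (Finset.mem_range.1 hi)
  · intro g _; rfl

lemma sum_univ_cast (n : ℕ) [NeZero n] :
    ∑ g : ZMod n, g = ((∑ i ∈ Finset.range n, i : ℕ) : ZMod n) := by
  rw [← sum_val_eq n]
  push_cast [ZMod.natCast_zmod_val]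
  rfl

lemma exists_half (n : ℕ) [NeZero n] (h4 : n % 4 ≠ 2) :
    ∃ c : ZMod n, ∑ g : ZMod n, g = 2 * c := by
  have hn : 0 < n := Nat.pos_of_ne_zero (NeZero.ne n)
  have hG := Finset.sum_range_id_mul_two n
  rw [sum_univ_cast n]
  rcases Nat.mod_two_eq_zero_or_one n with he | ho
  · -- n even, and n % 4 ≠ 2 so n % 4 = 0, n = 4m with m ≥ 1
    have h0 : n % 4 = 0 := by omega
    have hex : ∃ m, n = 4 * m + 4 := ⟨n / 4 - 1, by omega⟩
    obtain ⟨m, hm⟩ := hex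
    refine ⟨((m + 1 : ℕ) : ZMod n), ?_⟩
    have hS : ∑ i ∈ Finset.range n, i = n * (2 * m + 1) + 2 * (m + 1) := by
      have := hG
      rw [hm] at this ⊢
      have h1 : 4 * m + 4 - 1 = 4 * m + 3 := by omega
      rw [h1] at this
      nlinarith [this]
    rw [hS]
    push_cast [ZMod.natCast_self]
    ring
  · -- n odd: n = 2m+1, sum = n * m
    have hex : ∃ m, n = 2 * m + 1 := ⟨n / 2, by omega⟩
    obtain ⟨m, hm⟩ := hex
    refine ⟨0, ?_⟩
    have hS : ∑ i ∈ Finset.range n, i = n * m := by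
      have := hG
      rw [hm] at this ⊢
      have h1 : 2 * m + 1 - 1 = 2 * m := by omega
      rw [h1] at this
      nlinarith [this]
    rw [hS]
    push_cast [ZMod.natCast_self]
    ring

lemma univ_signed (n : ℕ) [NeZero n] (h4 : n % 4 ≠ 2) :
    ∃ ε : ZMod n → ℤ, (∀ g : ZMod n, ε g = 1 ∨ ε g = -1) ∧
      ∑ g : ZMod n, ε g • g = 0 := by
  obtain ⟨c, hc⟩ := exists_half n h4
  refine ⟨fun g => if g = c then -1 else 1, fun g => by by_cases h : g = c <;> simp [h], ?_⟩
  have key : ∀ g : ZMod n, (if g = c then (-1:ℤ) else 1) • g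
      = g - (if g = c then 2 * g else 0) := by
    intro g
    by_cases h : g = c <;> simp [h] <;> ring
  simp only [key]
  rw [Finset.sum_sub_distrib, Finset.sum_ite_eq' Finset.univ c (fun g => 2 * g)]
  simp [hc]

lemma no_signed (n : ℕ) [NeZero n] (h4 : n % 4 = 2) (ε : ZMod n → ℤ)
    (hε : ∀ g : ZMod n, ε g = 1 ∨ ε g = -1) :
    ∑ g : ZMod n, ε g • g ≠ 0 := by
  intro hsum
  set A : ℤ := ∑ g : ZMod n, ε g * (g.val : ℤ) with hA
  have h0 : ((A : ℤ) : ZMod n) = 0 := by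
    have : ((A : ℤ) : ZMod n) = ∑ g : ZMod n, ε g • g := by
      rw [hA]
      push_cast [ZMod.natCast_zmod_val]
      exact Finset.sum_congr rfl fun g _ => (zsmul_eq_mul _ _).symm
    rw [this, hsum]
  have hdvdn : (n : ℤ) ∣ A := (ZMod.intCast_zmod_eq_zero_iff_dvd A n).1 h0
  have h2n : (2 : ℤ) ∣ (n : ℤ) := ⟨(n / 2 : ℕ), by push_cast; omega⟩
  have h2A : (2 : ℤ) ∣ A := h2n.trans hdvdn
  set B : ℤ := ∑ g : ZMod n, (g.val : ℤ) with hB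
  have h2AB : (2 : ℤ) ∣ A - B := by
    rw [hA, hB, ← Finset.sum_sub_distrib]
    refine Finset.dvd_sum fun g _ => ?_
    rcases hε g with h | h <;> rw [h]
    · simp
    · exact ⟨-(g.val : ℤ), by ring⟩
  have h2B : (2 : ℤ) ∣ B := by
    have := dvd_sub h2A h2AB
    simpa using this
  -- B = sum of 0..n-1 which is odd
  have hBval : B = ((∑ i ∈ Finset.range n, i : ℕ) : ℤ) := by
    rw [hB, ← sum_val_eq n]
    push_cast
    rfl
  have hG := Finset.sum_range_id_mul_two n
  have hex : ∃ m, n = 4 * m + 2 := ⟨n / 4, by omega⟩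
  obtain ⟨m, hm⟩ := hex
  have hS : ∑ i ∈ Finset.range n, i = (2 * m + 1) * (4 * m + 1) := by
    rw [hm] at hG ⊢
    have h1 : 4 * m + 2 - 1 = 4 * m + 1 := by omega
    rw [h1] at hG
    refine Nat.eq_of_mul_eq_mul_right two_pos ?_
    rw [hG]; ring
  rw [hBval, hS] at h2B
  have hdd : (2 : ℕ) ∣ (2 * m + 1) * (4 * m + 1) := by exact_mod_cast h2B
  obtain ⟨k, hk⟩ := hdd
  have hmm := Nat.mul_mod (2 * m + 1) (4 * m + 1) 2
  rw [show (2 * m + 1) % 2 = 1 from by omega, show (4 * m + 1) % 2 = 1 from by omega] at hmm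
  omega

/-- The plus-minus weighted Harborth constant of the cyclic group `ZMod n`:
the smallest `ℓ` such that every subset of `ZMod n` of size at least `ℓ`
has a subset of size `n` admitting a `{+1,-1}`-weighted zero-sum. -/
noncomputable def harborthPM (n : ℕ) : ℕ :=
  sInf {ℓ : ℕ | ∀ S : Finset (ZMod n), ℓ ≤ S.card →
    ∃ T ⊆ S, T.card = n ∧
      ∃ ε : ZMod n → ℤ, (∀ g ∈ T, ε g = 1 ∨ ε g = -1) ∧ ∑ g ∈ T, ε g • g = 0}

theorem stmt_4 (n : ℕ) (hn : 0 < n) :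
    (n % 4 = 2 → harborthPM n = n + 1) ∧ (n % 4 ≠ 2 → harborthPM n = n) := by
  haveI : NeZero n := ⟨hn.ne'⟩
  have hcard : Fintype.card (ZMod n) = n := ZMod.card n
  set P := {ℓ : ℕ | ∀ S : Finset (ZMod n), ℓ ≤ S.card →
    ∃ T ⊆ S, T.card = n ∧
      ∃ ε : ZMod n → ℤ, (∀ g ∈ T, ε g = 1 ∨ ε g = -1) ∧ ∑ g ∈ T, ε g • g = 0}
    with hP
  have hub : ∀ S : Finset (ZMod n), S.card ≤ n := fun S => (Finset.card_le_univ S).trans hcard.le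
  have hlow : ∀ ℓ, ℓ < n → ℓ ∉ P := by
    intro ℓ hℓ h
    obtain ⟨S, _, hScard⟩ := Finset.exists_subset_card_eq
      (show ℓ ≤ (Finset.univ : Finset (ZMod n)).card by rw [Finset.card_univ, hcard]; omega)
    obtain ⟨T, hT, hTcard, _⟩ := h S hScard.ge
    have := Finset.card_le_card hT
    omega
  have hvac : (n + 1) ∈ P := by
    intro S hS
    exact absurd (hub S) (by omega)
  constructor
  · intro h4
    refine le_antisymm (Nat.sInf_le hvac) (le_csInf ⟨n + 1, hvac⟩ ?_)
    intro ℓ hℓ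
    by_contra hlt
    push_neg at hlt
    rcases Nat.lt_or_ge ℓ n with hc | hc
    · exact hlow ℓ hc hℓ
    · obtain ⟨T, _, hTcard, ε, hεT, hsum⟩ :=
        hℓ Finset.univ (by rw [Finset.card_univ, hcard]; omega)
      have hTuniv : T = Finset.univ := Finset.eq_univ_of_card T (hTcard.trans hcard.symm)
      subst hTuniv
      exact no_signed n h4 ε (fun g => hεT g (Finset.mem_univ g)) hsum
  · intro h4
    have hmem : n ∈ P := by
      intro S hS
      have hSuniv : S = Finset.univ :=
        Finset.eq_univ_of_card S ((le_antisymm (hub S) hS).trans hcard.symm)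
      obtain ⟨ε, hε, hsum⟩ := univ_signed n h4
      exact ⟨Finset.univ, hSuniv ▸ Finset.Subset.refl _,
        by rw [Finset.card_univ, hcard],
        ε, fun g _ => hε g, hsum⟩
    refine le_antisymm (Nat.sInf_le hmem) (le_csInf ⟨n, hmem⟩ ?_)
    intro ℓ hℓ
    by_contra hlt
    push_neg at hlt
    exact hlow ℓ hlt hℓ
end

section
/- Let G be a finite abelian group of odd order and S a sequence over G. Then the number of distinct plus-minus weighted sums of S equals |Σ⁰(S)|, and this is at least 1 + |supp(S) \ {0}|, where supp(S) is the set of distinct elements appearing in S. -/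
theorem stmt_8 (G : Type*) [AddCommGroup G] [Fintype G]
    (hodd : Odd (Fintype.card G)) (ℓ : ℕ) (g : Fin ℓ → G) :
    ({x : G | ∃ ε : Fin ℓ → ℤ, (∀ i, ε i = 1 ∨ ε i = -1) ∧
        x = ∑ i, ε i • g i}).ncard =
      ({x : G | ∃ I : Finset (Fin ℓ), x = ∑ i ∈ I, g i}).ncard ∧
    1 + ((Set.range g) \ {0}).ncard ≤
      ({x : G | ∃ I : Finset (Fin ℓ), x = ∑ i ∈ I, g i}).ncard := by
  set T : G := ∑ i, g i with hT
  set S0 : Set G := {x : G | ∃ I : Finset (Fin ℓ), x = ∑ i ∈ I, g i} with hS0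
  set f : G → G := fun x => (2 : ℤ) • x - T with hf
  -- injectivity of f
  have hinj : Function.Injective f := by
    intro x y hxy
    have h2 : (2 : ℤ) • x = (2 : ℤ) • y := by
      have : (2 : ℤ) • x - T = (2 : ℤ) • y - T := hxy
      exact sub_left_injective this
    have hn : (2 : ℕ) • (x - y) = 0 := by
      rw [two_nsmul]
      have : (2 : ℤ) • (x - y) = 0 := by rw [smul_sub, h2, sub_self]
      rw [two_zsmul] at this
      exact this
    have hdvd : addOrderOf (x - y) ∣ 2 := addOrderOf_dvd_of_nsmul_eq_zero hn
    have hdvd' : addOrderOf (x - y) ∣ Fintype.card G := addOrderOf_dvd_card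
    have hcop : Nat.Coprime 2 (Fintype.card G) := by
      rw [Nat.prime_two.coprime_iff_not_dvd]
      intro h
      exact (Nat.not_even_iff_odd.mpr hodd) ((even_iff_two_dvd).mpr h)
    have h1 : addOrderOf (x - y) ∣ 1 := hcop ▸ Nat.dvd_gcd hdvd hdvd'
    have : x - y = 0 := by
      have := (addOrderOf_dvd_iff_nsmul_eq_zero).mp h1
      simpa using this
    exact sub_eq_zero.mp this
  -- the key computation
  have key : ∀ I : Finset (Fin ℓ),
      (∑ i, (if i ∈ I then (1 : ℤ) else -1) • g i) = f (∑ i ∈ I, g i) := by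
    intro I
    have hpt : ∀ i : Fin ℓ, (if i ∈ I then (1 : ℤ) else -1) • g i
        = (if i ∈ I then (2 : ℤ) • g i else 0) - g i := by
      intro i
      by_cases h : i ∈ I <;> simp [h, two_zsmul, two_smul]
    calc (∑ i, (if i ∈ I then (1 : ℤ) else -1) • g i)
        = ∑ i, ((if i ∈ I then (2 : ℤ) • g i else 0) - g i) :=
          Finset.sum_congr rfl fun i _ => hpt i
      _ = (∑ i, if i ∈ I then (2 : ℤ) • g i else 0) - T := by
          rw [Finset.sum_sub_distrib]
      _ = (∑ i ∈ I, (2 : ℤ) • g i) - T := by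
          rw [Finset.sum_ite_mem, Finset.univ_inter]
      _ = f (∑ i ∈ I, g i) := by simp only [hf, Finset.smul_sum]
  -- the plus-minus sum set equals the image of S0 under f
  have himg : {x : G | ∃ ε : Fin ℓ → ℤ, (∀ i, ε i = 1 ∨ ε i = -1) ∧
      x = ∑ i, ε i • g i} = f '' S0 := by
    ext x
    constructor
    · rintro ⟨ε, hε, rfl⟩
      refine ⟨∑ i ∈ Finset.univ.filter (fun i => ε i = 1), g i, ⟨_, rfl⟩, ?_⟩
      rw [← key]
      refine Finset.sum_congr rfl fun i _ => ?_
      rcases hε i with h | h <;> simp [h, Finset.mem_filter]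
    · rintro ⟨y, ⟨I, rfl⟩, rfl⟩
      exact ⟨fun i => if i ∈ I then 1 else -1,
        fun i => by by_cases h : i ∈ I <;> simp [h], (key I).symm⟩
  constructor
  · rw [himg, Set.ncard_image_of_injective _ hinj]
  · have hsub : insert (0 : G) (Set.range g \ {0}) ⊆ S0 := by
      rintro x (rfl | ⟨⟨i, rfl⟩, -⟩)
      · exact ⟨∅, by simp⟩
      · exact ⟨{i}, by simp⟩
    have h0 : (0 : G) ∉ Set.range g \ {0} := by simp
    calc 1 + (Set.range g \ {0}).ncard
        = (insert (0 : G) (Set.range g \ {0})).ncard := by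
          rw [Set.ncard_insert_of_notMem h0 (Set.toFinite _)]; ring
      _ ≤ S0.ncard := Set.ncard_le_ncard hsub (Set.toFinite _)
end

section
/- For every n ≥ 2, the Harborth constant of G = C_2 ⊕ C_{2n} satisfies: g(G) = 2n + 3 if n is odd and g(G) = 2n + 2 if n is even. -/
open Finset

namespace HarborthAux

lemma zmod2_cases : ∀ x : ZMod 2, x = 0 ∨ x = 1 := by decide

lemma zmod2_add_self : ∀ x : ZMod 2, x + x = 0 := by decide

lemma zmod2n_add_self {n : ℕ} (hn : 2 ≤ n) (x : ZMod (2*n)) (hx : x + x = 0) :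
    x = 0 ∨ x = (n : ZMod (2*n)) := by
  haveI : NeZero (2*n) := ⟨by omega⟩
  have hv : (x + x).val = (x.val + x.val) % (2*n) := ZMod.val_add x x
  rw [hx, ZMod.val_zero] at hv
  have hlt := ZMod.val_lt x
  have hdvd : (2*n) ∣ (x.val + x.val) := Nat.dvd_of_mod_eq_zero hv.symm
  obtain ⟨k, hk⟩ := hdvd
  have hval : x.val = 0 ∨ x.val = n := by
    rcases Nat.lt_or_ge k 2 with h | h
    · interval_cases k <;> omega
    · exfalso; nlinarith
  have hx' : ((x.val : ℕ) : ZMod (2*n)) = x := ZMod.natCast_rightInverse x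
  rcases hval with h | h
  · left; rw [← hx', h, Nat.cast_zero]
  · right; rw [← hx', h]

variable {n : ℕ} [NeZero (2*n)]

/-- number of solutions of `a + a = s` is at most 4 -/
lemma card_double_fiber_le (hn : 2 ≤ n) (s : ZMod 2 × ZMod (2*n)) :
    (univ.filter (fun a : ZMod 2 × ZMod (2*n) => a + a = s)).card ≤ 4 := by
  rcases (univ.filter (fun a : ZMod 2 × ZMod (2*n) => a + a = s)).eq_empty_or_nonempty
    with h | ⟨a0, ha0⟩
  · simp [h]
  · have ha0' : a0 + a0 = s := (mem_filter.mp ha0).2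
    have hsub : (univ.filter (fun a : ZMod 2 × ZMod (2*n) => a + a = s)).image (fun a => a - a0) ⊆
        ({((0:ZMod 2), (0:ZMod (2*n))), (0, (n:ZMod (2*n))), (1, 0), (1, (n:ZMod (2*n)))} :
          Finset (ZMod 2 × ZMod (2*n))) := by
      intro x hx
      simp only [mem_image] at hx
      obtain ⟨a, ha, rfl⟩ := hx
      have ha' : a + a = s := (mem_filter.mp ha).2
      have h1 : (a - a0) + (a - a0) = 0 := by
        rw [show (a - a0) + (a - a0) = (a + a) - (a0 + a0) by abel, ha', ha0', sub_self]
      have hsnd : (a - a0).2 + (a - a0).2 = 0 := congrArg Prod.snd h1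
      have hsnd' := zmod2n_add_self hn _ hsnd
      have hfst := zmod2_cases (a - a0).1
      simp only [mem_insert, mem_singleton, Prod.ext_iff]
      rcases hfst with h | h <;> rcases hsnd' with h' | h' <;> simp [h, h']
    have hcard := Finset.card_le_card hsub
    have hinj : ((univ.filter (fun a : ZMod 2 × ZMod (2*n) => a + a = s)).image
        (fun a => a - a0)).card
        = (univ.filter (fun a : ZMod 2 × ZMod (2*n) => a + a = s)).card :=
      Finset.card_image_of_injOn (fun a _ b _ h => sub_left_injective h)
    have h4 : ({((0:ZMod 2), (0:ZMod (2*n))), (0, (n:ZMod (2*n))), (1, 0), (1, (n:ZMod (2*n)))} :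
        Finset (ZMod 2 × ZMod (2*n))).card ≤ 4 := by
      apply le_trans (card_insert_le _ _)
      apply Nat.succ_le_succ
      apply le_trans (card_insert_le _ _)
      apply Nat.succ_le_succ
      apply le_trans (card_insert_le _ _)
      simp
    omega

lemma card_G (hn : 2 ≤ n) : Fintype.card (ZMod 2 × ZMod (2*n)) = 4*n := by
  rw [Fintype.card_prod, ZMod.card, ZMod.card]; ring

/-- no-pair gives an injection into the complement -/
lemma nopair_inj (hn : 2 ≤ n) (s : ZMod 2 × ZMod (2*n)) (S A : Finset (ZMod 2 × ZMod (2*n)))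
    (hAS : A ⊆ S)
    (hdouble : ∀ a ∈ A, a + a ≠ s)
    (h : ∀ a ∈ S, ∀ b ∈ S, a ≠ b → a + b ≠ s) :
    A.card ≤ 4*n - S.card := by
  have hmaps : ∀ a ∈ A, s - a ∈ univ \ S := by
    intro a ha
    simp only [mem_sdiff, mem_univ, true_and]
    intro hb
    rcases eq_or_ne (s - a) a with he | hne
    · exact hdouble a ha (by rw [show a + a = (s - a) + a by rw [he]]; abel)
    · exact h a (hAS ha) _ hb hne.symm (by abel)
  have hinj : Set.InjOn (fun a => s - a) (A : Set (ZMod 2 × ZMod (2*n))) := by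
    intro a _ b _ hab
    exact sub_right_injective hab
  have hcards := Finset.card_le_card_of_injOn _ hmaps hinj
  have hc : (univ \ S).card = Fintype.card (ZMod 2 × ZMod (2*n)) - S.card := by
    rw [Finset.card_sdiff_of_subset (subset_univ _), card_univ]
  rw [hc, card_G hn] at hcards
  exact hcards

/-- the core odd-case upper bound: any `2n+3` elements contain three distinct
elements summing to the total sum. -/
lemma core_odd (hn : 2 ≤ n) (S : Finset (ZMod 2 × ZMod (2*n))) (hS : S.card = 2*n+3) :
    ∃ x ∈ S, ∃ a ∈ S, ∃ b ∈ S, x ≠ a ∧ x ≠ b ∧ a ≠ b ∧ x + a + b = ∑ g ∈ S, g := by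
  set s := ∑ g ∈ S, g with hs
  have hx : ∃ x ∈ S, x.1 = s.1 + 1 := by
    by_contra hc
    push_neg at hc
    have hinj : Set.InjOn Prod.snd (S : Set (ZMod 2 × ZMod (2*n))) := by
      intro a ha b hb hab
      have key : ∀ u v : ZMod 2, u ≠ v + 1 → u = v := by decide
      have h1 : a.1 = s.1 := key _ _ (hc a ha)
      have h2 : b.1 = s.1 := key _ _ (hc b hb)
      exact Prod.ext (h1.trans h2.symm) hab
    have hle := Finset.card_le_card_of_injOn Prod.snd (fun a _ => Finset.mem_univ a.2) hinj
    rw [card_univ, ZMod.card] at hle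
    omega
  obtain ⟨x, hxS, hx1⟩ := hx
  have hcard' : (S.erase x).card = 2*n+2 := by rw [Finset.card_erase_of_mem hxS, hS]; omega
  have hsum' : ∑ g ∈ S.erase x, g = s - x := by
    rw [eq_sub_iff_add_eq, hs, add_comm]
    exact Finset.add_sum_erase S id hxS
  have hnodouble : ∀ a : ZMod 2 × ZMod (2*n), a + a ≠ s - x := by
    intro a ha
    have h1 : a.1 + a.1 = (s - x).1 := congrArg Prod.fst ha
    rw [zmod2_add_self, Prod.fst_sub, hx1] at h1
    have hk : ∀ u : ZMod 2, (0:ZMod 2) ≠ u - (u + 1) := by decide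
    exact hk s.1 h1
  have hpair : ∃ a ∈ S.erase x, ∃ b ∈ S.erase x, a ≠ b ∧ a + b = s - x := by
    by_contra hc
    push_neg at hc
    have := nopair_inj hn (s - x) (S.erase x) (S.erase x) (subset_refl _)
      (fun a _ => hnodouble a)
      (fun a ha b hb hab => hc a ha b hb hab)
    omega
  obtain ⟨a, haS, b, hbS, hab, hsumab⟩ := hpair
  have hax : a ≠ x := Finset.ne_of_mem_erase haS
  have hbx : b ≠ x := Finset.ne_of_mem_erase hbS
  refine ⟨x, hxS, a, Finset.mem_of_mem_erase haS, b, Finset.mem_of_mem_erase hbS,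
    hax.symm, hbx.symm, hab, ?_⟩
  rw [show x + a + b = x + (a + b) by abel, hsumab]; abel

/-- sum of first coordinates counts elements with first coordinate one -/
lemma sum_fst (A : Finset (ZMod 2 × ZMod (2*n))) :
    (∑ g ∈ A, g).1 = ((A.filter (fun a => a.1 = 1)).card : ZMod 2) := by
  rw [Prod.fst_sum]
  rw [← Finset.sum_filter_add_sum_filter_not A (fun a => a.1 = 1)]
  have e1 : ∑ a ∈ A.filter (fun a => a.1 = 1), a.1
      = ((A.filter (fun a => a.1 = 1)).card : ZMod 2) := by
    rw [Finset.sum_congr rfl (fun a ha => (mem_filter.mp ha).2)]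
    simp [mul_comm]
  have e2 : ∑ a ∈ A.filter (fun a => ¬ a.1 = 1), a.1 = 0 := by
    apply Finset.sum_eq_zero
    intro a ha
    rcases zmod2_cases a.1 with h | h
    · exact h
    · exact absurd h (mem_filter.mp ha).2
  rw [e1, e2, add_zero]

lemma card_fst_one_univ :
    ((univ : Finset (ZMod 2 × ZMod (2*n))).filter (fun a => a.1 = 1)).card = 2*n := by
  have : (univ : Finset (ZMod 2 × ZMod (2*n))).filter (fun a => a.1 = 1)
      = univ.map ⟨fun y : ZMod (2*n) => ((1 : ZMod 2), y),
          Prod.mk_right_injective _⟩ := by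
    ext ⟨u, v⟩
    simp only [mem_filter, mem_univ, true_and, mem_map, Function.Embedding.coeFn_mk,
      Prod.mk.injEq]
    aesop
  rw [this, Finset.card_map, card_univ, ZMod.card]

/-- the core even-case upper bound -/
lemma core_even (hn : 2 ≤ n) (hev : Even n) (S : Finset (ZMod 2 × ZMod (2*n)))
    (hS : S.card = 2*n+2) :
    ∃ a ∈ S, ∃ b ∈ S, a ≠ b ∧ a + b = ∑ g ∈ S, g := by
  by_contra hc
  push_neg at hc
  set s := ∑ g ∈ S, g with hs
  set F := univ.filter (fun a : ZMod 2 × ZMod (2*n) => a + a = s) with hF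
  have hcF : F.card ≤ 4 := card_double_fiber_le hn s
  have hdouble : ∀ a ∈ S \ F, a + a ≠ s := by
    intro a ha
    have := (mem_sdiff.mp ha).2
    simp only [hF, mem_filter, mem_univ, true_and] at this
    exact this
  have h1 : (S \ F).card ≤ 4*n - S.card :=
    nopair_inj hn s S (S \ F) (Finset.sdiff_subset) hdouble hc
  have h2 : S.card - F.card ≤ (S \ F).card := Finset.le_card_sdiff F S
  have hGle : S.card ≤ 4*n := by
    have := Finset.card_le_card (Finset.subset_univ S)
    rwa [card_univ, card_G hn] at this
  have hSdF : (S \ F).card = 2*n - 2 := by omega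
  have hSiF : (S ∩ F).card = 4 := by
    have := Finset.card_sdiff_add_card_inter S F
    omega
  have hFS : F ⊆ S := by
    have hsub : S ∩ F ⊆ F := Finset.inter_subset_right
    have heq := Finset.eq_of_subset_of_card_le hsub (by omega)
    rw [← heq]
    exact Finset.inter_subset_left
  have hcF4 : F.card = 4 := by
    have := Finset.card_le_card hFS
    omega
  -- s has first coordinate 0
  obtain ⟨a0, ha0⟩ := Finset.card_pos.mp (show 0 < F.card by omega)
  have ha0' : a0 + a0 = s := by
    rw [hF] at ha0; exact (mem_filter.mp ha0).2
  have hs1 : s.1 = 0 := by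
    have h := congrArg Prod.fst ha0'
    rw [Prod.fst_add, zmod2_add_self] at h
    exact h.symm
  -- the image of S \ F under a ↦ s - a is exactly the complement
  have hmaps : ∀ a ∈ S \ F, s - a ∈ univ \ S := by
    intro a ha
    simp only [mem_sdiff, mem_univ, true_and]
    intro hb
    rcases eq_or_ne (s - a) a with he | hne
    · exact hdouble a ha (by rw [show a + a = (s - a) + a by rw [he]]; abel)
    · exact hc a (mem_sdiff.mp ha).1 _ hb hne.symm (by abel)
  have hinj : Set.InjOn (fun a => s - a) ((S \ F : Finset _) : Set (ZMod 2 × ZMod (2*n))) := by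
    intro a _ b _ hab
    exact sub_right_injective hab
  have hcompl : (univ \ S).card = 2*n - 2 := by
    rw [Finset.card_sdiff_of_subset (subset_univ _), card_univ, card_G hn]
    omega
  have himg : (S \ F).image (fun a => s - a) = univ \ S := by
    apply Finset.eq_of_subset_of_card_le
    · intro y hy
      simp only [mem_image] at hy
      obtain ⟨a, ha, rfl⟩ := hy
      exact hmaps a ha
    · rw [Finset.card_image_of_injOn hinj, hSdF, hcompl]
  -- counting first coordinates
  have hNuniv := card_fst_one_univ (n := n)
  have hNF : (F.filter (fun a => a.1 = 1)).card = 2 := by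
    have hbij : (F.filter (fun a => a.1 = 1)).card = (F.filter (fun a => ¬ a.1 = 1)).card := by
      apply Finset.card_bij (fun a _ => a + ((1:ZMod 2), (0:ZMod (2*n))))
      · intro a ha
        simp only [mem_filter] at ha ⊢
        obtain ⟨haF, ha1⟩ := ha
        rw [hF, mem_filter] at haF
        constructor
        · rw [hF, mem_filter]
          refine ⟨mem_univ _, ?_⟩
          rw [show a + (1,0) + (a + (1,0)) = (a + a) + (((1:ZMod 2),(0:ZMod (2*n))) + (1,0)) by abel,
            haF.2]
          have : ((1:ZMod 2),(0:ZMod (2*n))) + (1,0) = 0 := by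
            apply Prod.ext
            · exact zmod2_add_self 1
            · exact add_zero 0
          rw [this, add_zero]
        · show ¬ (a + ((1:ZMod 2), (0:ZMod (2*n)))).1 = 1
          rw [Prod.fst_add, ha1]
          exact (by decide : ¬ ((1:ZMod 2) + 1 = 1))
      · intro a ha b hb h
        exact add_right_cancel h
      · intro b hb
        simp only [mem_filter] at hb
        obtain ⟨hbF, hb1⟩ := hb
        rw [hF, mem_filter] at hbF
        refine ⟨b + ((1:ZMod 2), (0:ZMod (2*n))), ?_, ?_⟩
        · simp only [mem_filter]
          constructor
          · rw [hF, mem_filter]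
            refine ⟨mem_univ _, ?_⟩
            rw [show b + (1,0) + (b + (1,0)) = (b + b) + (((1:ZMod 2),(0:ZMod (2*n))) + (1,0)) by abel,
              hbF.2]
            have : ((1:ZMod 2),(0:ZMod (2*n))) + (1,0) = 0 := by
              apply Prod.ext
              · exact zmod2_add_self 1
              · exact add_zero 0
            rw [this, add_zero]
          · show (b + ((1:ZMod 2), (0:ZMod (2*n)))).1 = 1
            rw [Prod.fst_add]
            rcases zmod2_cases b.1 with h | h
            · rw [h]; exact (by decide : (0:ZMod 2) + 1 = 1)
            · exact absurd h hb1
        · rw [add_assoc]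
          have : ((1:ZMod 2),(0:ZMod (2*n))) + (1,0) = 0 := by
            apply Prod.ext
            · exact zmod2_add_self 1
            · exact add_zero 0
          rw [this, add_zero]
    have hsplit := Finset.card_filter_add_card_filter_not
      (s := F) (p := fun a => a.1 = 1)
    omega
  have hNdiff : ((univ \ S).filter (fun a => a.1 = 1)).card
      = ((S \ F).filter (fun a => a.1 = 1)).card := by
    rw [← himg, Finset.filter_image]
    rw [Finset.card_image_of_injOn (hinj.mono (by intro a ha; exact (mem_filter.mp ha).1))]
    congr 1
    apply Finset.filter_congr
    intro a ha
    have : (s - a).1 = a.1 := by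
      rw [Prod.fst_sub, hs1]
      rcases zmod2_cases a.1 with h | h <;> rw [h] <;> decide
    simp [this]
  have hsplitU : ((univ : Finset (ZMod 2 × ZMod (2*n))).filter (fun a => a.1 = 1)).card
      = (S.filter (fun a => a.1 = 1)).card + ((univ \ S).filter (fun a => a.1 = 1)).card := by
    rw [← Finset.card_union_of_disjoint, ← Finset.filter_union]
    · congr 2
      rw [Finset.union_sdiff_of_subset (subset_univ S)]
    · exact Finset.disjoint_filter_filter (Finset.disjoint_sdiff)
  have hsplitS : (S.filter (fun a => a.1 = 1)).card
      = (F.filter (fun a => a.1 = 1)).card + ((S \ F).filter (fun a => a.1 = 1)).card := by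
    rw [← Finset.card_union_of_disjoint, ← Finset.filter_union]
    · congr 2
      rw [Finset.union_sdiff_of_subset hFS]
    · exact Finset.disjoint_filter_filter (Finset.disjoint_sdiff)
  -- conclude: N(S) = n + 1
  have hNS : (S.filter (fun a => a.1 = 1)).card = n + 1 := by omega
  have hfin := sum_fst S
  rw [← hs, hs1, hNS] at hfin
  obtain ⟨k, hk⟩ := hev
  have : ((n + 1 : ℕ) : ZMod 2) = 1 := by
    rw [hk]
    push_cast
    rw [zmod2_add_self, zero_add]
  rw [this] at hfin
  exact absurd hfin (by decide)


lemma sum_range_cast (m : ℕ) [NeZero m] :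
    ∑ y : ZMod m, y = ∑ i ∈ range m, (i : ZMod m) := by
  apply Finset.sum_bij' (fun (y : ZMod m) _ => y.val) (fun (i : ℕ) _ => (i : ZMod m))
  · intro y _
    simp [ZMod.val_lt y]
  · intro i hi
    exact mem_univ _
  · intro y _
    exact ZMod.natCast_rightInverse y
  · intro i hi
    exact ZMod.val_cast_of_lt (mem_range.mp hi)
  · intro y _
    exact (ZMod.natCast_rightInverse y).symm

lemma sum_univ_zmod (hn : 2 ≤ n) : ∑ y : ZMod (2*n), y = (n : ZMod (2*n)) := by
  obtain ⟨m, rfl⟩ : ∃ m, n = m + 1 := ⟨n - 1, by omega⟩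
  rw [sum_range_cast]
  have h1 : ∑ i ∈ range (2*(m+1)), i = (m+1)*(2*m+1) := by
    have h := Finset.sum_range_id_mul_two (2*(m+1))
    rw [show 2*(m+1) - 1 = 2*m+1 by omega,
      show 2*(m+1)*(2*m+1) = ((m+1)*(2*m+1))*2 by ring] at h
    exact Nat.eq_of_mul_eq_mul_right (by omega) h
  have h2 : ∑ i ∈ range (2*(m+1)), ((i : ZMod (2*(m+1))))
      = ((∑ i ∈ range (2*(m+1)), i : ℕ) : ZMod (2*(m+1))) := by
    rw [Nat.cast_sum]
  rw [h2, h1, show (m+1)*(2*m+1) = (m+1) + (2*(m+1))*m by ring]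
  push_cast
  rw [show ((2:ZMod (2*(m+1))) * (↑m+1)) = ((2*(m+1) : ℕ) : ZMod (2*(m+1))) by push_cast; ring,
    ZMod.natCast_self]
  ring

/-- lower bound construction, works for all n: a set of size 2n+1 with no zero-sum
subset of size 2n -/
lemma lower_small (hn : 2 ≤ n) :
    ∃ S : Finset (ZMod 2 × ZMod (2*n)), S.card = 2*n+1 ∧
      ¬ ∃ T ⊆ S, T.card = 2*n ∧ ∑ g ∈ T, g = 0 := by
  set L : Finset (ZMod 2 × ZMod (2*n)) :=
    univ.map ⟨fun y : ZMod (2*n) => ((0:ZMod 2), y), Prod.mk_right_injective _⟩ with hL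
  have hmemL : ∀ p : ZMod 2 × ZMod (2*n), p ∈ L ↔ p.1 = 0 := by
    rintro ⟨u, v⟩
    simp only [hL, mem_map, Function.Embedding.coeFn_mk, mem_univ, Prod.mk.injEq]
    aesop
  set S := insert ((1:ZMod 2), (0:ZMod (2*n))) L with hS
  have h10 : ((1:ZMod 2), (0:ZMod (2*n))) ∉ L := by
    rw [hmemL]
    exact (by decide : ¬ ((1:ZMod 2) = 0))
  have hcard : S.card = 2*n+1 := by
    rw [hS, Finset.card_insert_of_notMem h10, Finset.card_map, card_univ, ZMod.card]
  have hsumL : ∑ g ∈ L, g = ((0:ZMod 2), (n : ZMod (2*n))) := by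
    rw [hL, Finset.sum_map]
    apply Prod.ext
    · rw [Prod.fst_sum]
      simp
    · rw [Prod.snd_sum]
      simpa using sum_univ_zmod hn
  have hsumS : ∑ g ∈ S, g = ((1:ZMod 2), (n : ZMod (2*n))) := by
    rw [hS, Finset.sum_insert h10, hsumL]
    apply Prod.ext
    · simp
    · simp
  have hns : (∑ g ∈ S, g) ∉ S := by
    rw [hsumS, hS, Finset.mem_insert, hmemL]
    push_neg
    constructor
    · intro h
      have := congrArg Prod.snd h
      simp only at this
      have : (2*n) ∣ n := (ZMod.natCast_eq_zero_iff n (2*n)).mp this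
      have := Nat.le_of_dvd (by omega) this
      omega
    · exact (by decide : ¬ ((1:ZMod 2) = 0))
  refine ⟨S, hcard, ?_⟩
  rintro ⟨T, hTS, hTcard, hTsum⟩
  have hdcard : (S \ T).card = 1 := by
    rw [Finset.card_sdiff_of_subset hTS]
    omega
  obtain ⟨a, ha⟩ := Finset.card_eq_one.mp hdcard
  have hsum := Finset.sum_sdiff (f := fun g => g) hTS
  rw [ha, Finset.sum_singleton, hTsum, add_zero] at hsum
  have haS : a ∈ S := by
    have : a ∈ S \ T := by rw [ha]; exact Finset.mem_singleton_self a
    exact (Finset.mem_sdiff.mp this).1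
  rw [hsum] at haS
  exact hns haS

lemma cast_inj_lt (hn : 2 ≤ n) {i j : ℕ} (hi : i < 2*n) (hj : j < 2*n)
    (h : (i : ZMod (2*n)) = (j : ZMod (2*n))) : i = j := by
  haveI : NeZero (2*n) := ⟨by omega⟩
  have := congrArg ZMod.val h
  rwa [ZMod.val_cast_of_lt hi, ZMod.val_cast_of_lt hj] at this

/-- lower bound construction for odd n: a set of size 2n+2 with zero sum and no
two distinct elements summing to zero -/
lemma lower_odd (hn : 2 ≤ n) (hodd : Odd n) :
    ∃ S : Finset (ZMod 2 × ZMod (2*n)), S.card = 2*n+2 ∧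
      ¬ ∃ T ⊆ S, T.card = 2*n ∧ ∑ g ∈ T, g = 0 := by
  set IA : Finset ℕ := range (n+1) with hIA
  set IB : Finset ℕ := insert 0 (Finset.Ico n (2*n)) with hIB
  set fA : ℕ → ZMod 2 × ZMod (2*n) := fun i => ((0:ZMod 2), (i : ZMod (2*n))) with hfA
  set fB : ℕ → ZMod 2 × ZMod (2*n) := fun i => ((1:ZMod 2), (i : ZMod (2*n))) with hfB
  have hIAlt : ∀ i ∈ IA, i < 2*n := by
    intro i hi
    rw [hIA, mem_range] at hi
    omega
  have hIBlt : ∀ i ∈ IB, i < 2*n := by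
    intro i hi
    rw [hIB, mem_insert, Finset.mem_Ico] at hi
    omega
  have hinjA : Set.InjOn fA (IA : Set ℕ) := by
    intro i hi j hj h
    exact cast_inj_lt hn (hIAlt i hi) (hIAlt j hj) (congrArg Prod.snd h)
  have hinjB : Set.InjOn fB (IB : Set ℕ) := by
    intro i hi j hj h
    exact cast_inj_lt hn (hIBlt i hi) (hIBlt j hj) (congrArg Prod.snd h)
  set A := IA.image fA with hA
  set B := IB.image fB with hB
  have hcA : A.card = n+1 := by
    rw [hA, Finset.card_image_of_injOn hinjA, hIA, Finset.card_range]
  have hcIB : IB.card = n+1 := by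
    rw [hIB, Finset.card_insert_of_notMem (by intro h; rw [Finset.mem_Ico] at h; omega), Nat.card_Ico]
    omega
  have hcB : B.card = n+1 := by
    rw [hB, Finset.card_image_of_injOn hinjB, hcIB]
  have hdisj : Disjoint A B := by
    rw [Finset.disjoint_left]
    intro p hpA hpB
    rw [hA, Finset.mem_image] at hpA
    rw [hB, Finset.mem_image] at hpB
    obtain ⟨i, _, hi⟩ := hpA
    obtain ⟨j, _, hj⟩ := hpB
    have := congrArg Prod.fst (hi.trans hj.symm)
    exact (by decide : ¬ ((0:ZMod 2) = 1)) this
  set S := A ∪ B with hS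
  have hcard : S.card = 2*n+2 := by
    rw [hS, Finset.card_union_of_disjoint hdisj, hcA, hcB]
    omega
  -- the total sum is zero
  obtain ⟨k, hk⟩ := hodd
  have hsumA : ∑ g ∈ A, g = ((0:ZMod 2), ((∑ i ∈ IA, i : ℕ) : ZMod (2*n))) := by
    rw [hA, Finset.sum_image (fun x hx y hy h => hinjA hx hy h)]
    apply Prod.ext
    · rw [Prod.fst_sum]; simp [hfA]
    · rw [Prod.snd_sum]; simp [hfA]
  have hsumB : ∑ g ∈ B, g = (((IB.card : ℕ) : ZMod 2), ((∑ i ∈ IB, i : ℕ) : ZMod (2*n))) := by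
    rw [hB, Finset.sum_image (fun x hx y hy h => hinjB hx hy h)]
    apply Prod.ext
    · rw [Prod.fst_sum]; simp [hfB]
    · rw [Prod.snd_sum]; simp [hfB]
  have hfstB : ((IB.card : ℕ) : ZMod 2) = 0 := by
    rw [hcIB, hk]
    push_cast
    rw [show ((2:ZMod 2) * k + 1 + 1) = (2 * k + (1+1) : ZMod 2) by ring]
    rw [show ((1:ZMod 2) + 1) = 0 from zmod2_add_self 1, add_zero,
      show (2:ZMod 2) = 0 from (by decide), zero_mul]
  have hsndkey : ((∑ i ∈ IA, i) + (∑ i ∈ IB, i) : ℕ) = 2*n*n := by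
    obtain ⟨m, rfl⟩ : ∃ m, n = m+2 := ⟨n-2, by omega⟩
    have g1 := Finset.sum_range_id_mul_two (m+3)
    have g2 := Finset.sum_range_id_mul_two (2*(m+2))
    have g3 := Finset.sum_range_id_mul_two (m+2)
    rw [show (m+3) - 1 = m+2 by omega, show (m+3)*(m+2) = m*m+5*m+6 by ring] at g1
    rw [show 2*(m+2) - 1 = 2*m+3 by omega,
      show 2*(m+2)*(2*m+3) = 4*(m*m)+14*m+12 by ring] at g2
    rw [show (m+2) - 1 = m+1 by omega, show (m+2)*(m+1) = m*m+3*m+2 by ring] at g3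
    have gsplit : (∑ i ∈ range (m+2), i) + (∑ i ∈ Finset.Ico (m+2) (2*(m+2)), i)
        = ∑ i ∈ range (2*(m+2)), i := by
      simp only [Finset.range_eq_Ico]
      exact Finset.sum_Ico_consecutive _ (by omega) (by omega)
    have hIBsum : ∑ i ∈ IB, i = ∑ i ∈ Finset.Ico (m+2) (2*(m+2)), i := by
      rw [hIB, Finset.sum_insert (by intro h; rw [Finset.mem_Ico] at h; omega)]
      omega
    have hIAsum : ∑ i ∈ IA, i = ∑ i ∈ range (m+3), i := by
      rw [hIA]
    rw [hIAsum, hIBsum, show 2*(m+2)*(m+2) = 2*(m*m) + 8*m + 8 by ring]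
    omega
  have hsumS : ∑ g ∈ S, g = 0 := by
    rw [hS, Finset.sum_union hdisj, hsumA, hsumB]
    apply Prod.ext
    · simp [hfstB]
    · show ((∑ i ∈ IA, i : ℕ) : ZMod (2*n)) + ((∑ i ∈ IB, i : ℕ) : ZMod (2*n)) = 0
      rw [← Nat.cast_add, hsndkey, show 2*n*n = (2*n)*n by ring, Nat.cast_mul,
        ZMod.natCast_self, zero_mul]
  -- no two distinct elements of S sum to zero
  have hnopair : ∀ a ∈ S, ∀ b ∈ S, a ≠ b → a + b ≠ 0 := by
    have hmemS : ∀ p, p ∈ S → (∃ i ∈ IA, fA i = p) ∨ (∃ i ∈ IB, fB i = p) := by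
      intro p hp
      rw [hS, Finset.mem_union, hA, hB] at hp
      rcases hp with h | h
      · left; exact Finset.mem_image.mp h
      · right; exact Finset.mem_image.mp h
    intro a ha b hb hne hab
    have hsnd0 : ∀ i j : ℕ, i < 2*n → j < 2*n → i ≠ j →
        ((i:ZMod (2*n)) + (j:ZMod (2*n)) = 0) → (2*n) ∣ (i+j) := by
      intro i j hi hj hij h
      rw [← Nat.cast_add] at h
      exact (ZMod.natCast_eq_zero_iff _ _).mp h
    rcases hmemS a ha with ⟨i, hiI, hia⟩ | ⟨i, hiI, hia⟩ <;>
      rcases hmemS b hb with ⟨j, hjI, hjb⟩ | ⟨j, hjI, hjb⟩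
    · -- both in A
      have hij : i ≠ j := by
        intro h; apply hne; rw [← hia, ← hjb, h]
      have h2 := congrArg Prod.snd hab
      rw [← hia, ← hjb] at h2
      have hdvd := hsnd0 i j (hIAlt i hiI) (hIAlt j hjI) hij h2
      rw [hIA, mem_range] at hiI hjI
      have := Nat.eq_zero_of_dvd_of_lt hdvd (by omega)
      omega
    · -- a in A, b in B : first coordinates give 0 + 1 = 0, contradiction
      have h1 := congrArg Prod.fst hab
      rw [← hia, ← hjb] at h1
      exact (by decide : ¬ ((0:ZMod 2) + 1 = 0)) h1
    · have h1 := congrArg Prod.fst hab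
      rw [← hia, ← hjb] at h1
      exact (by decide : ¬ ((1:ZMod 2) + 0 = 0)) h1
    · -- both in B
      have hij : i ≠ j := by
        intro h; apply hne; rw [← hia, ← hjb, h]
      have h2 := congrArg Prod.snd hab
      rw [← hia, ← hjb] at h2
      have hdvd := hsnd0 i j (hIBlt i hiI) (hIBlt j hjI) hij h2
      rw [hIB, mem_insert, Finset.mem_Ico] at hiI hjI
      rcases hiI with rfl | hiI <;> rcases hjI with rfl | hjI
      · omega
      · have := Nat.eq_zero_of_dvd_of_lt hdvd (by omega); omega
      · have := Nat.eq_zero_of_dvd_of_lt hdvd (by omega); omega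
      · have hdvd' : (2*n) ∣ (i+j) - 2*n := Nat.dvd_sub hdvd ⟨1, by ring⟩
        have := Nat.eq_zero_of_dvd_of_lt hdvd' (by omega)
        omega
  refine ⟨S, hcard, ?_⟩
  rintro ⟨T, hTS, hTcard, hTsum⟩
  have hdcard : (S \ T).card = 2 := by
    rw [Finset.card_sdiff_of_subset hTS]
    omega
  obtain ⟨a, b, hne, hab⟩ := Finset.card_eq_two.mp hdcard
  have hsum := Finset.sum_sdiff (f := fun g => g) hTS
  rw [hab, Finset.sum_pair hne, hTsum, add_zero, hsumS] at hsum
  have haS : a ∈ S := (Finset.mem_sdiff.mp (hab ▸ Finset.mem_insert_self a {b})).1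
  have hbS : b ∈ S := (Finset.mem_sdiff.mp (hab ▸ Finset.mem_insert_of_mem (Finset.mem_singleton_self b))).1
  exact hnopair a haS b hbS hne hsum


/-- a set realizing a pair/triple decomposition gives a zero-sum subset of size 2n -/
lemma mem_of_core_even (hn : 2 ≤ n) (hev : Even n) :
    ∀ S : Finset (ZMod 2 × ZMod (2 * n)), 2*n+2 ≤ S.card →
      ∃ T ⊆ S, T.card = 2 * n ∧ ∑ g ∈ T, g = 0 := by
  intro S hS
  obtain ⟨S', hsub, hcard⟩ := Finset.exists_subset_card_eq hS
  obtain ⟨a, ha, b, hb, hab, hsum⟩ := core_even hn hev S' hcard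
  have hpair : ({a, b} : Finset (ZMod 2 × ZMod (2*n))) ⊆ S' := by
    intro y hy
    simp only [Finset.mem_insert, Finset.mem_singleton] at hy
    rcases hy with rfl | rfl <;> assumption
  refine ⟨S' \ {a, b}, (Finset.sdiff_subset).trans hsub, ?_, ?_⟩
  · rw [Finset.card_sdiff_of_subset hpair, Finset.card_pair hab, hcard]
    omega
  · have h := Finset.sum_sdiff (f := fun g => g) hpair
    rw [Finset.sum_pair hab, hsum] at h
    exact add_eq_right.mp h

lemma mem_of_core_odd (hn : 2 ≤ n) :
    ∀ S : Finset (ZMod 2 × ZMod (2 * n)), 2*n+3 ≤ S.card →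
      ∃ T ⊆ S, T.card = 2 * n ∧ ∑ g ∈ T, g = 0 := by
  intro S hS
  obtain ⟨S', hsub, hcard⟩ := Finset.exists_subset_card_eq hS
  obtain ⟨x, hx, a, ha, b, hb, hxa, hxb, hab, hsum⟩ := core_odd hn S' hcard
  have htrip : ({x, a, b} : Finset (ZMod 2 × ZMod (2*n))) ⊆ S' := by
    intro y hy
    simp only [Finset.mem_insert, Finset.mem_singleton] at hy
    rcases hy with rfl | rfl | rfl <;> assumption
  have hc3 : ({x, a, b} : Finset (ZMod 2 × ZMod (2*n))).card = 3 := by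
    rw [Finset.card_insert_of_notMem (by simp [hxa, hxb]),
      Finset.card_insert_of_notMem (by simp [hab]), Finset.card_singleton]
  refine ⟨S' \ {x, a, b}, (Finset.sdiff_subset).trans hsub, ?_, ?_⟩
  · rw [Finset.card_sdiff_of_subset htrip, hc3, hcard]
    omega
  · have h := Finset.sum_sdiff (f := fun g => g) htrip
    have hsum3 : ∑ g ∈ ({x, a, b} : Finset (ZMod 2 × ZMod (2*n))), g = x + a + b := by
      rw [Finset.sum_insert (by simp [hxa, hxb]), Finset.sum_pair hab, ← add_assoc]
    rw [hsum3, hsum] at h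
    exact add_eq_right.mp h

end HarborthAux


/-- The (classical) Harborth constant of `C₂ ⊕ C₂ₙ`: the smallest `ℓ` such that
every subset of `ZMod 2 × ZMod (2n)` of size at least `ℓ` has a subset of size
`2n` (= the exponent) summing to zero. -/
noncomputable def harborthC2C2n (n : ℕ) : ℕ :=
  sInf {ℓ : ℕ | ∀ S : Finset (ZMod 2 × ZMod (2 * n)), ℓ ≤ S.card →
    ∃ T ⊆ S, T.card = 2 * n ∧ ∑ g ∈ T, g = 0}

theorem stmt_12 (n : ℕ) (hn : 2 ≤ n) :
    (Odd n → harborthC2C2n n = 2 * n + 3) ∧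
    (Even n → harborthC2C2n n = 2 * n + 2) := by
  haveI : NeZero (2*n) := ⟨by omega⟩
  let P : Set ℕ := {ℓ : ℕ | ∀ S : Finset (ZMod 2 × ZMod (2 * n)), ℓ ≤ S.card →
    ∃ T ⊆ S, T.card = 2 * n ∧ ∑ g ∈ T, g = 0}
  have hdef : harborthC2C2n n = sInf P := rfl
  have hmono : ∀ k m : ℕ, k ≤ m → k ∈ P → m ∈ P :=
    fun k m h hk S hS => hk S (le_trans h hS)
  constructor
  · intro hodd
    have hmem : (2*n+3) ∈ P := HarborthAux.mem_of_core_odd hn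
    have hnot : (2*n+2) ∉ P := by
      obtain ⟨S, hcard, hno⟩ := HarborthAux.lower_odd hn hodd
      intro hmemP
      exact hno (hmemP S (le_of_eq hcard.symm))
    rw [hdef]
    apply le_antisymm (Nat.sInf_le hmem)
    apply le_csInf ⟨_, hmem⟩
    intro m hm
    by_contra hlt
    push_neg at hlt
    exact hnot (hmono m (2*n+2) (by omega) hm)
  · intro heven
    have hmem : (2*n+2) ∈ P := HarborthAux.mem_of_core_even hn heven
    have hnot : (2*n+1) ∉ P := by
      obtain ⟨S, hcard, hno⟩ := HarborthAux.lower_small hn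
      intro hmemP
      exact hno (hmemP S (le_of_eq hcard.symm))
    rw [hdef]
    apply le_antisymm (Nat.sInf_le hmem)
    apply le_csInf ⟨_, hmem⟩
    intro m hm
    by_contra hlt
    push_neg at hlt
    exact hnot (hmono m (2*n+1) (by omega) hm)
end

section
/- Let n ≥ 3 and G = C_2 ⊕ C_{2n} with basis (e_1, e_2), ord(e_1) = 2, ord(e_2) = 2n. Let S be a squarefree sequence over G of length 2n+1 with support contained in the union of exactly three of the four cosets of 2G in G, such that each of these three cosets contains an odd number of elements of S. Then S has no plus-minus weighted zero-subsum of length 2n. -/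
lemma sum_erase_univ_eq : ∀ c : ZMod 2 × ZMod 2,
    ∑ d ∈ Finset.univ.erase c, d = c := by decide

theorem stmt_13 (n : ℕ) (hn : 3 ≤ n)
    (ψ : ZMod 2 × ZMod (2 * n) → ZMod 2 × ZMod 2)
    (hψ : ∀ g, ψ g = (g.1, ZMod.castHom (dvd_mul_right 2 n) (ZMod 2) g.2))
    (S : Finset (ZMod 2 × ZMod (2 * n))) (hcard : S.card = 2 * n + 1)
    -- the support of `S` is contained in the union of the three cosets of `2G`
    -- distinct from the coset `c`, and each of these three cosets contains an
    -- odd number of elements of `S`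
    (c : ZMod 2 × ZMod 2) (hc : ∀ g ∈ S, ψ g ≠ c)
    (hodd : ∀ d : ZMod 2 × ZMod 2, d ≠ c →
      Odd (S.filter (fun g => ψ g = d)).card) :
    ¬ ∃ T ⊆ S, T.card = 2 * n ∧
      ∃ ε : ZMod 2 × ZMod (2 * n) → ℤ, (∀ g ∈ T, ε g = 1 ∨ ε g = -1) ∧
        ∑ g ∈ T, ε g • g = 0 := by
  rintro ⟨T, hTS, hTcard, ε, hε, hsum⟩
  set f : ZMod 2 × ZMod (2 * n) →+ ZMod 2 × ZMod 2 :=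
    (AddMonoidHom.id (ZMod 2)).prodMap (ZMod.castHom (dvd_mul_right 2 n) (ZMod 2)).toAddMonoidHom
    with hf
  have hψf : ∀ g, ψ g = f g := fun g => by rw [hψ]; rfl
  have h2 : ∀ x : ZMod 2 × ZMod 2, x + x = 0 := by decide
  have hodd_smul : ∀ (k : ℕ) (d : ZMod 2 × ZMod 2), Odd k → k • d = d := by
    rintro k d ⟨m, rfl⟩
    rw [add_nsmul, one_nsmul, two_mul, add_nsmul, h2 (m • d), zero_add]
  -- the sum of f over T is 0
  have h0 : ∑ g ∈ T, f g = 0 := by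
    have h := congrArg f hsum
    rw [map_sum, map_zero] at h
    rw [← h]
    refine Finset.sum_congr rfl fun g hg => ?_
    rcases hε g hg with h1 | h1 <;> rw [h1]
    · rw [one_smul]
    · rw [neg_smul, one_smul, map_neg]
      exact (neg_eq_of_add_eq_zero_right (h2 (f g))).symm
  -- S \ T is a single element s
  have hdiff : (S \ T).card = 1 := by
    rw [Finset.card_sdiff_of_subset hTS, hcard, hTcard]; omega
  obtain ⟨s, hs⟩ := Finset.card_eq_one.mp hdiff
  have hsS : s ∈ S := (Finset.mem_sdiff.mp (hs ▸ Finset.mem_singleton_self s)).1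
  -- sum over S
  have hSsum : ∑ g ∈ S, f g = c := by
    have hfib : ∑ d ∈ Finset.univ, ∑ g ∈ S.filter (fun g => ψ g = d), f g
        = ∑ g ∈ S, f g := Finset.sum_fiberwise S (fun g => ψ g) f
    rw [← hfib]
    have hterm : ∀ d : ZMod 2 × ZMod 2,
        ∑ g ∈ S.filter (fun g => ψ g = d), f g
          = (S.filter (fun g => ψ g = d)).card • d := by
      intro d
      rw [Finset.sum_congr rfl (fun g hg => ?_), Finset.sum_const]
      rw [← (Finset.mem_filter.mp hg).2, hψf]
    rw [Finset.sum_congr rfl fun d _ => hterm d]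
    rw [← Finset.sum_erase_add _ _ (Finset.mem_univ c)]
    have hc0 : S.filter (fun g => ψ g = c) = ∅ := Finset.filter_eq_empty_iff.mpr hc
    rw [hc0]
    simp only [Finset.card_empty, zero_smul, add_zero]
    rw [Finset.sum_congr rfl fun d hd =>
      hodd_smul _ d (hodd d (Finset.ne_of_mem_erase hd))]
    exact sum_erase_univ_eq c
  -- combine
  have hsplit : ∑ g ∈ S \ T, f g + ∑ g ∈ T, f g = ∑ g ∈ S, f g :=
    Finset.sum_sdiff hTS
  rw [hs, Finset.sum_singleton, h0, add_zero, hSsum] at hsplit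
  exact hc s hsS ((hψf s).trans hsplit)
end

section
/- Let n ≥ 3 be even and G = C_2 ⊕ C_{2n} = ⟨e_1⟩ ⊕ ⟨e_2⟩ with ord(e_1) = 2, ord(e_2) = 2n. Let S be a subset of G of size 2n+1, written as S = S_0 ∪ (e_1 + S_1) with S_0, S_1 ⊆ ⟨e_2⟩, and let j ∈ {0,1} be the index with |S_j| odd. Then S has no zero-sum subset of size 2n if and only if σ(S_0) + σ(S_1) ∉ S_j, where σ denotes the sum of all elements. -/
theorem stmt_14 (n : ℕ) (hn : 3 ≤ n) (hneven : Even n)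
    (S₀ S₁ : Finset (ZMod (2 * n)))
    (S : Finset (ZMod 2 × ZMod (2 * n)))
    (hS : S = S₀.image (fun x => ((0 : ZMod 2), x)) ∪
              S₁.image (fun x => ((1 : ZMod 2), x)))
    (hcard : S₀.card + S₁.card = 2 * n + 1)
    (Sj : Finset (ZMod (2 * n)))
    (hj : (Sj = S₀ ∧ Odd S₀.card) ∨ (Sj = S₁ ∧ Odd S₁.card)) :
    (¬ ∃ T ⊆ S, T.card = 2 * n ∧ ∑ g ∈ T, g = 0) ↔
      (∑ x ∈ S₀, x) + (∑ x ∈ S₁, x) ∉ Sj := by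
  set s := (∑ x ∈ S₀, x) + (∑ x ∈ S₁, x) with hs
  have hinj : ∀ c : ZMod 2, Function.Injective (fun x : ZMod (2*n) => (c, x)) := by
    intro c a b h; simpa using h
  have hdisj : Disjoint (S₀.image (fun x => ((0:ZMod 2), x)))
      (S₁.image (fun x => ((1:ZMod 2), x))) := by
    rw [Finset.disjoint_left]
    intro a h1 h2
    simp only [Finset.mem_image] at h1 h2
    obtain ⟨x, -, rfl⟩ := h1
    obtain ⟨y, -, hy⟩ := h2
    have h10 : (1 : ZMod 2) = 0 := congrArg Prod.fst hy
    exact absurd h10 (by decide)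
  have hcardS : S.card = 2*n+1 := by
    rw [hS, Finset.card_union_of_disjoint hdisj,
      Finset.card_image_of_injective _ (hinj 0),
      Finset.card_image_of_injective _ (hinj 1), hcard]
  have hsum : ∑ g ∈ S, g = ((S₁.card : ZMod 2), s) := by
    rw [hS, Finset.sum_union hdisj,
      Finset.sum_image (fun a _ b _ h => hinj 0 h),
      Finset.sum_image (fun a _ b _ h => hinj 1 h)]
    apply Prod.ext
    · simp [Prod.fst_sum, Finset.sum_const]
    · simp [Prod.snd_sum, hs]
  have hequiv : (∃ T ⊆ S, T.card = 2*n ∧ ∑ g ∈ T, g = 0) ↔ (∑ g ∈ S, g) ∈ S := by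
    constructor
    · rintro ⟨T, hTS, hTc, hT0⟩
      have h1 : (S \ T).card = 1 := by
        rw [Finset.card_sdiff_of_subset hTS, hcardS, hTc]; omega
      obtain ⟨a, ha⟩ := Finset.card_eq_one.mp h1
      have haS : a ∈ S := by
        have : a ∈ S \ T := ha ▸ Finset.mem_singleton_self a
        exact (Finset.mem_sdiff.mp this).1
    
      have hsplit := Finset.sum_sdiff (f := fun g => g) hTS
      rw [ha, Finset.sum_singleton, hT0, add_zero] at hsplit
      rw [← hsplit]
      exact haS
    · intro h
      refine ⟨S.erase (∑ g ∈ S, g), Finset.erase_subset _ _, ?_, ?_⟩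
      · rw [Finset.card_erase_of_mem h, hcardS]; omega
      · rw [Finset.sum_erase_eq_sub h]; simp
  have hmem : (∑ g ∈ S, g) ∈ S ↔ s ∈ Sj := by
    rw [hs]
    rcases hj with ⟨heq, hodd⟩ | ⟨heq, hodd⟩ <;> rw [heq]
    · have he : S₁.card % 2 = 0 := by
        have := Nat.odd_iff.mp hodd; omega
      have hc : (S₁.card : ZMod 2) = 0 := by
        rw [← ZMod.natCast_mod (Finset.card S₁) 2, he]; simp
      rw [hsum, hc, hS]
      simp [Finset.mem_union, Finset.mem_image, Prod.mk.injEq, hs]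
    · have he : S₁.card % 2 = 1 := Nat.odd_iff.mp hodd
      have hc : (S₁.card : ZMod 2) = 1 := by
        rw [← ZMod.natCast_mod (Finset.card S₁) 2, he]; simp
      rw [hsum, hc, hS]
      simp [Finset.mem_union, Finset.mem_image, Prod.mk.injEq, hs]
  rw [not_iff_not.mpr hequiv, hmem]
end

section
/- Let n ≥ 3 be odd, G = C_2 ⊕ C_2 ⊕ C_n = ⟨f_1⟩ ⊕ ⟨f_2⟩ ⊕ ⟨e⟩ (ord f_1 = ord f_2 = 2, ord e = n). Let S_0, S_1, S_2, S_3 ⊆ ⟨e⟩ each of size (n+1)/2 such that each S_i contains exactly one of g, -g for every nonzero g ∈ ⟨e⟩ (and contains 0), and σ(S_0)+σ(S_1)+σ(S_2)+σ(S_3) = 0. Then for any h ∈ G, the set S = h + (S_0 ∪ (f_1+S_1) ∪ (f_2+S_2) ∪ (f_1+f_2+S_3)) of size 2n+2 has no subset of size 2n summing to 0. -/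
theorem stmt_15 (n : ℕ) (hn : 3 ≤ n) (hnodd : Odd n)
    (S₀ S₁ S₂ S₃ : Finset (ZMod n))
    (hcard : ∀ i ∈ [S₀, S₁, S₂, S₃], i.card = (n + 1) / 2)
    (hzero : ∀ i ∈ [S₀, S₁, S₂, S₃], (0 : ZMod n) ∈ i)
    (hpm : ∀ i ∈ [S₀, S₁, S₂, S₃], ∀ g : ZMod n, g ≠ 0 → (g ∈ i ↔ -g ∉ i))
    (hsum : (∑ x ∈ S₀, x) + (∑ x ∈ S₁, x) + (∑ x ∈ S₂, x) + (∑ x ∈ S₃, x) = 0)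
    (h : ZMod 2 × ZMod 2 × ZMod n)
    (S : Finset (ZMod 2 × ZMod 2 × ZMod n))
    (hS : S = S₀.image (fun x => h + ((0 : ZMod 2), (0 : ZMod 2), x)) ∪
              S₁.image (fun x => h + ((1 : ZMod 2), (0 : ZMod 2), x)) ∪
              S₂.image (fun x => h + ((0 : ZMod 2), (1 : ZMod 2), x)) ∪
              S₃.image (fun x => h + ((1 : ZMod 2), (1 : ZMod 2), x))) :
    S.card = 2 * n + 2 ∧ ¬ ∃ T ⊆ S, T.card = 2 * n ∧ ∑ g ∈ T, g = 0 := by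
  obtain ⟨h1, h2, h3⟩ := h
  haveI : NeZero n := ⟨by omega⟩
  set c := (n + 1) / 2 with hc
  have hc2 : c + c = n + 1 := by obtain ⟨k, hk⟩ := hnodd; omega
  have hcard0 : S₀.card = c := hcard S₀ (by simp)
  have hcard1 : S₁.card = c := hcard S₁ (by simp)
  have hcard2 : S₂.card = c := hcard S₂ (by simp)
  have hcard3 : S₃.card = c := hcard S₃ (by simp)
  -- injectivity of the coset maps
  have hinj : ∀ (ε δ : ZMod 2), Function.Injective
      (fun x : ZMod n => (h1, h2, h3) + (ε, δ, x)) := by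
    intro ε δ x y hxy
    simpa using congrArg (fun p : ZMod 2 × ZMod 2 × ZMod n => p.2.2) hxy
  -- pairwise disjointness
  have hdisj : ∀ (ε δ ε' δ' : ZMod 2), (ε, δ) ≠ (ε', δ') → ∀ (A B : Finset (ZMod n)),
      Disjoint (A.image fun x => (h1, h2, h3) + (ε, δ, x))
               (B.image fun x => (h1, h2, h3) + (ε', δ', x)) := by
    intro ε δ ε' δ' hne A B
    rw [Finset.disjoint_left]
    rintro a ha hb
    simp only [Finset.mem_image] at ha hb
    obtain ⟨x, hx, rfl⟩ := ha
    obtain ⟨y, hy, heq⟩ := hb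
    apply hne
    have e1 := congrArg (fun p : ZMod 2 × ZMod 2 × ZMod n => p.1) heq
    have e2 := congrArg (fun p : ZMod 2 × ZMod 2 × ZMod n => p.2.1) heq
    simp only [Prod.fst_add, Prod.snd_add] at e1 e2
    have e1' : ε' = ε := by simpa using e1
    have e2' : δ' = δ := by simpa using e2
    rw [e1', e2']
  have dj1 : Disjoint (S₀.image fun x => (h1, h2, h3) + ((0:ZMod 2), (0:ZMod 2), x))
      (S₁.image fun x => (h1, h2, h3) + ((1:ZMod 2), (0:ZMod 2), x)) :=
    hdisj 0 0 1 0 (by decide) _ _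
  have dj2 : Disjoint ((S₀.image fun x => (h1, h2, h3) + ((0:ZMod 2), (0:ZMod 2), x)) ∪
      (S₁.image fun x => (h1, h2, h3) + ((1:ZMod 2), (0:ZMod 2), x)))
      (S₂.image fun x => (h1, h2, h3) + ((0:ZMod 2), (1:ZMod 2), x)) := by
    rw [Finset.disjoint_union_left]
    exact ⟨hdisj 0 0 0 1 (by decide) _ _, hdisj 1 0 0 1 (by decide) _ _⟩
  have dj3 : Disjoint ((S₀.image fun x => (h1, h2, h3) + ((0:ZMod 2), (0:ZMod 2), x)) ∪
      (S₁.image fun x => (h1, h2, h3) + ((1:ZMod 2), (0:ZMod 2), x)) ∪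
      (S₂.image fun x => (h1, h2, h3) + ((0:ZMod 2), (1:ZMod 2), x)))
      (S₃.image fun x => (h1, h2, h3) + ((1:ZMod 2), (1:ZMod 2), x)) := by
    rw [Finset.disjoint_union_left, Finset.disjoint_union_left]
    exact ⟨⟨hdisj 0 0 1 1 (by decide) _ _, hdisj 1 0 1 1 (by decide) _ _⟩,
      hdisj 0 1 1 1 (by decide) _ _⟩
  have hScard : S.card = 2 * n + 2 := by
    rw [hS, Finset.card_union_of_disjoint dj3, Finset.card_union_of_disjoint dj2,
      Finset.card_union_of_disjoint dj1,
      Finset.card_image_of_injective _ (hinj 0 0), Finset.card_image_of_injective _ (hinj 1 0),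
      Finset.card_image_of_injective _ (hinj 0 1), Finset.card_image_of_injective _ (hinj 1 1),
      hcard0, hcard1, hcard2, hcard3]
    omega
  refine ⟨hScard, ?_⟩
  -- the vector sum lemma
  have hvec : ∀ A : Finset (ZMod n),
      ∑ x ∈ A, ((0 : ZMod 2), (0 : ZMod 2), (x : ZMod n)) = (0, 0, ∑ x ∈ A, x) := by
    intro A
    refine Prod.ext ?_ (Prod.ext ?_ ?_) <;>
      simp [Prod.fst_sum, Prod.snd_sum]
  have himg : ∀ (ε δ : ZMod 2) (A : Finset (ZMod n)),
      ∑ a ∈ A.image (fun x => (h1, h2, h3) + (ε, δ, x)), a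
        = A.card • ((h1 + ε, h2 + δ, h3) : ZMod 2 × ZMod 2 × ZMod n)
          + ((0 : ZMod 2), (0 : ZMod 2), ∑ x ∈ A, x) := by
    intro ε δ A
    rw [Finset.sum_image (fun x _ y _ hxy => hinj ε δ hxy)]
    have key : ∀ x : ZMod n, (h1, h2, h3) + (ε, δ, x)
        = ((h1 + ε, h2 + δ, h3) : ZMod 2 × ZMod 2 × ZMod n) + ((0 : ZMod 2), (0 : ZMod 2), x) := by
      intro x
      simp [Prod.ext_iff]
    simp_rw [key]
    rw [Finset.sum_add_distrib, Finset.sum_const, hvec A]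
  have hn0 : n • h3 = 0 := by rw [nsmul_eq_mul, ZMod.natCast_self, zero_mul]
  have hcast : (c : ZMod n) + (c : ZMod n) = 1 := by
    have : ((c + c : ℕ) : ZMod n) = ((n + 1 : ℕ) : ZMod n) := by rw [hc2]
    push_cast at this
    simpa [ZMod.natCast_self] using this
  have hσS : ∑ g ∈ S, g = ((h1 + h1, h2 + h2, h3 + h3) : ZMod 2 × ZMod 2 × ZMod n) := by
    rw [hS, Finset.sum_union dj3, Finset.sum_union dj2, Finset.sum_union dj1,
      himg, himg, himg, himg, hcard0, hcard1, hcard2, hcard3]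
    have e2 : (2 : ZMod 2) = 0 := rfl
    refine Prod.ext ?_ (Prod.ext ?_ ?_)
    · simp only [Prod.fst_add, Prod.smul_fst]
      simp only [nsmul_eq_mul]
      linear_combination (2 * (c : ZMod 2) * h1 + (c : ZMod 2) - h1) * e2
    · simp only [Prod.snd_add, Prod.fst_add, Prod.smul_snd, Prod.smul_fst]
      simp only [nsmul_eq_mul]
      linear_combination (2 * (c : ZMod 2) * h2 + (c : ZMod 2) - h2) * e2
    · simp only [Prod.snd_add, Prod.smul_snd]
      simp only [nsmul_eq_mul]
      linear_combination hsum + (h3 + h3) * hcast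
  -- cancellation lemma
  have cancel : ∀ u v : ZMod 2 × ZMod 2 × ZMod n,
      ((h1, h2, h3) + u) + ((h1, h2, h3) + v) = ((h1 + h1, h2 + h2, h3 + h3) :
        ZMod 2 × ZMod 2 × ZMod n) → u + v = 0 := by
    intro u v huv
    have hh : ((h1, h2, h3) : ZMod 2 × ZMod 2 × ZMod n) + (h1, h2, h3)
        = (h1 + h1, h2 + h2, h3 + h3) := rfl
    have hrg : ((h1, h2, h3) + u) + ((h1, h2, h3) + v)
        = (((h1, h2, h3) : ZMod 2 × ZMod 2 × ZMod n) + (h1, h2, h3)) + (u + v) := by abel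
    have h2' : (((h1, h2, h3) : ZMod 2 × ZMod 2 × ZMod n) + (h1, h2, h3)) + (u + v)
        = (((h1, h2, h3) : ZMod 2 × ZMod 2 × ZMod n) + (h1, h2, h3)) + 0 := by
      rw [← hrg, huv, add_zero, hh]
    exact add_left_cancel h2'
  -- same-coset lemma
  have same : ∀ (A : Finset (ZMod n)), (∀ g : ZMod n, g ≠ 0 → (g ∈ A ↔ -g ∉ A)) →
      ∀ x y : ZMod n, x ∈ A → y ∈ A → x + y = 0 → x = y := by
    intro A hA x y hx hy hxy
    by_cases h0 : x = 0
    · subst h0; rw [zero_add] at hxy; exact hxy.symm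
    · have hyx : y = -x := eq_neg_of_add_eq_zero_right hxy
      exact absurd (hyx ▸ hy) ((hA x h0).mp hx)
  rintro ⟨T, hTS, hTcard, hTsum⟩
  have hUcard : (S \ T).card = 2 := by
    rw [Finset.card_sdiff_of_subset hTS, hScard, hTcard]; omega
  have hUsum : ∑ g ∈ S \ T, g = ((h1 + h1, h2 + h2, h3 + h3) : ZMod 2 × ZMod 2 × ZMod n) := by
    have hsdiff := Finset.sum_sdiff (f := fun g : ZMod 2 × ZMod 2 × ZMod n => g) hTS
    rw [hTsum, add_zero, hσS] at hsdiff
    exact hsdiff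
  obtain ⟨a, b, hab, hU⟩ := Finset.card_eq_two.mp hUcard
  have haS : a ∈ S := (Finset.mem_sdiff.mp (hU ▸ Finset.mem_insert_self a {b})).1
  have hbS : b ∈ S := (Finset.mem_sdiff.mp
    (hU ▸ Finset.mem_insert_of_mem (Finset.mem_singleton_self b))).1
  have habsum : a + b = ((h1 + h1, h2 + h2, h3 + h3) : ZMod 2 × ZMod 2 × ZMod n) := by
    rw [hU, Finset.sum_pair hab] at hUsum
    exact hUsum
  rw [hS] at haS hbS
  simp only [Finset.mem_union, Finset.mem_image] at haS hbS
  rcases haS with ((⟨x, hx, rfl⟩ | ⟨x, hx, rfl⟩) | ⟨x, hx, rfl⟩) | ⟨x, hx, rfl⟩ <;>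
    rcases hbS with ((⟨y, hy, rfl⟩ | ⟨y, hy, rfl⟩) | ⟨y, hy, rfl⟩) | ⟨y, hy, rfl⟩ <;>
    (have key := cancel _ _ habsum
     rw [Prod.mk_add_mk, Prod.mk_add_mk] at key
     rw [show ((0 : ZMod 2 × ZMod 2 × ZMod n)) = ((0 : ZMod 2), (0 : ZMod 2), (0 : ZMod n))
       from rfl] at key
     rw [Prod.mk.injEq, Prod.mk.injEq] at key
     obtain ⟨k1, k2, k3⟩ := key) <;>
    first
      | exact absurd k1 (by decide)
      | exact absurd k2 (by decide)
      | exact hab (by rw [show x = y from same S₀ (hpm S₀ (by simp)) x y hx hy k3])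
      | exact hab (by rw [show x = y from same S₁ (hpm S₁ (by simp)) x y hx hy k3])
      | exact hab (by rw [show x = y from same S₂ (hpm S₂ (by simp)) x y hx hy k3])
      | exact hab (by rw [show x = y from same S₃ (hpm S₃ (by simp)) x y hx hy k3])
end

section
/- Let n ≥ 3, G = C_2 ⊕ C_{2n}, and let S be a squarefree sequence over G of length 2n+1 that has no plus-minus weighted zero-subsum of length 2n. Then for every g dividing S, the dilation 2·Σ⁰(g⁻¹S) equals 2G. -/
open Finset

set_option linter.unusedSectionVars false
set_option maxHeartbeats 1000000

section SSsec
variable {β α : Type*} [DecidableEq β] [AddCommGroup α] [DecidableEq α]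

/-- subset sums -/
def SSf (f : β → α) (T : Finset β) : Finset α := T.powerset.image (fun I => ∑ t ∈ I, f t)

lemma mem_SSf {f : β → α} {T : Finset β} {x : α} :
    x ∈ SSf f T ↔ ∃ I, I ⊆ T ∧ ∑ t ∈ I, f t = x := by
  simp [SSf, Finset.mem_image, Finset.mem_powerset]

lemma zero_mem_SSf (f : β → α) (T : Finset β) : (0:α) ∈ SSf f T :=
  mem_SSf.mpr ⟨∅, Finset.empty_subset _, Finset.sum_empty⟩

lemma single_mem_SSf (f : β → α) {T : Finset β} {t : β} (ht : t ∈ T) : f t ∈ SSf f T :=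
  mem_SSf.mpr ⟨{t}, Finset.singleton_subset_iff.mpr ht, Finset.sum_singleton _ _⟩

lemma pair_mem_SSf (f : β → α) {T : Finset β} {t₁ t₂ : β} (h1 : t₁ ∈ T) (h2 : t₂ ∈ T)
    (hne : t₁ ≠ t₂) : f t₁ + f t₂ ∈ SSf f T :=
  mem_SSf.mpr ⟨{t₁, t₂}, by simp [Finset.insert_subset_iff, h1, h2],
    Finset.sum_pair hne⟩

lemma image_add_comm' (a b : α) (s : Finset α) :
    (s.image (b + ·)).image (a + ·) = (s.image (a + ·)).image (b + ·) := by
  rw [Finset.image_image, Finset.image_image]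
  apply Finset.image_congr
  intro x _
  simp only [Function.comp_apply]
  exact add_left_comm a b x

lemma SSf_insert (f : β → α) {a : β} {s : Finset β} (ha : a ∉ s) :
    SSf f (insert a s) = SSf f s ∪ (SSf f s).image (f a + ·) := by
  unfold SSf
  rw [Finset.powerset_insert, Finset.image_union]
  congr 1
  rw [Finset.image_image, Finset.image_image]
  apply Finset.image_congr
  intro I hI
  simp only [Function.comp_apply]
  rw [Finset.sum_insert (fun hmem => ha (Finset.mem_powerset.mp hI hmem))]

lemma SSf_growth (f : β → α) : ∀ (T : Finset β),
    1 + (T.filter fun t => ¬ ((SSf f T).image (f t + ·) = SSf f T)).card ≤ (SSf f T).card := by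
  intro T
  induction T using Finset.strongInduction with
  | _ T ih =>
    by_cases hemp : (T.filter fun t => ¬ ((SSf f T).image (f t + ·) = SSf f T)) = ∅
    · rw [hemp]
      simpa using Finset.card_pos.mpr ⟨0, zero_mem_SSf f T⟩
    · obtain ⟨t₀, ht₀⟩ := Finset.nonempty_iff_ne_empty.mpr hemp
      have ht₀T : t₀ ∈ T := (Finset.mem_filter.mp ht₀).1
      have ht₀P : ¬ ((SSf f T).image (f t₀ + ·) = SSf f T) := (Finset.mem_filter.mp ht₀).2
      set T' := T.erase t₀ with hT'
      have hins : T = insert t₀ T' := (Finset.insert_erase ht₀T).symm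
      have hkey : SSf f T = SSf f T' ∪ (SSf f T').image (f t₀ + ·) := by
        conv_lhs => rw [hins]
        exact SSf_insert f (Finset.notMem_erase _ _)
      have hsub : SSf f T' ⊆ SSf f T := hkey ▸ Finset.subset_union_left
      by_cases hstab' : (SSf f T').image (f t₀ + ·) = SSf f T'
      · exfalso
        apply ht₀P
        have hTT' : SSf f T = SSf f T' := by rw [hkey, hstab', Finset.union_self]
        rw [hTT', hstab']
      · have hcard' : (SSf f T').card + 1 ≤ (SSf f T).card := by
          have hne : ¬ ((SSf f T').image (f t₀ + ·) ⊆ SSf f T') := by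
            intro hsub2
            exact hstab' (Finset.eq_of_subset_of_card_le hsub2
              (le_of_eq (Finset.card_image_of_injective _ (add_right_injective (f t₀))).symm))
          obtain ⟨x, hx1, hx2⟩ := Finset.not_subset.mp hne
          have hxT : x ∈ SSf f T := hkey ▸ Finset.mem_union_right _ hx1
          calc (SSf f T').card + 1 = (insert x (SSf f T')).card :=
                (Finset.card_insert_of_notMem hx2).symm
            _ ≤ (SSf f T).card := Finset.card_le_card (Finset.insert_subset hxT hsub)
        have hfilter : (T.filter fun t => ¬ ((SSf f T).image (f t + ·) = SSf f T)) ⊆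
            insert t₀ (T'.filter fun t => ¬ ((SSf f T').image (f t + ·) = SSf f T')) := by
          intro t ht
          obtain ⟨htT, htP⟩ := Finset.mem_filter.mp ht
          rcases eq_or_ne t t₀ with rfl | hne
          · exact Finset.mem_insert_self _ _
          · refine Finset.mem_insert_of_mem (Finset.mem_filter.mpr
              ⟨Finset.mem_erase.mpr ⟨hne, htT⟩, ?_⟩)
            intro hPt'
            apply htP
            rw [hkey, Finset.image_union, hPt', image_add_comm', hPt']
        have ihT' := ih T' (Finset.erase_ssubset ht₀T)
        have h1 : (T.filter fun t => ¬ ((SSf f T).image (f t + ·) = SSf f T)).card ≤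
            (T'.filter fun t => ¬ ((SSf f T').image (f t + ·) = SSf f T')).card + 1 := by
          calc _ ≤ (insert t₀ (T'.filter fun t => ¬ ((SSf f T').image (f t + ·) = SSf f T'))).card :=
              Finset.card_le_card hfilter
            _ ≤ _ := Finset.card_insert_le _ _
        omega
end SSsec


lemma two_mul_eq_zero' {n : ℕ} (hn : 3 ≤ n) (z : ZMod (2*n)) (h : 2 * z = 0) :
    z = 0 ∨ z = (n : ZMod (2*n)) := by
  haveI : NeZero (2*n) := ⟨by omega⟩
  have hz : ((z.val : ℕ) : ZMod (2*n)) = z := ZMod.natCast_zmod_val z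
  have h2 : ((2 * z.val : ℕ) : ZMod (2*n)) = 0 := by
    push_cast
    rw [hz, h]
  have hdvd : (2*n) ∣ 2 * z.val := (ZMod.natCast_eq_zero_iff _ _).mp h2
  have hlt : z.val < 2*n := ZMod.val_lt z
  obtain ⟨k, hk⟩ := hdvd
  have : z.val = 0 ∨ z.val = n := by
    have hkle : k < 2 := by nlinarith
    interval_cases k
    · left; omega
    · right; omega
  rcases this with h' | h'
  · left
    rw [← hz, h']
    simp
  · right
    rw [← hz, h']

lemma card_four' {γ : Type*} [DecidableEq γ] (a b c d : γ) :
    ({a, b, c, d} : Finset γ).card ≤ 4 := by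
  apply le_trans (Finset.card_insert_le _ _)
  have h1 : ({b, c, d} : Finset γ).card ≤ 3 := by
    apply le_trans (Finset.card_insert_le _ _)
    have h2 : ({c, d} : Finset γ).card ≤ 2 := by
      apply le_trans (Finset.card_insert_le _ _)
      simp
    omega
  omega

lemma zmod2_cases : ∀ w : ZMod 2, w = 0 ∨ w = 1 := by decide

lemma card_le_four_mul' {n : ℕ} (hn : 3 ≤ n) (s : Finset (ZMod 2 × ZMod (2*n)))
    (u : Finset (ZMod (2*n))) (hmap : ∀ x ∈ s, 2 * x.2 ∈ u) : s.card ≤ 4 * u.card := by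
  haveI : NeZero (2*n) := ⟨by omega⟩
  rw [Finset.card_eq_sum_card_fiberwise hmap]
  have hbound : ∀ c ∈ u, (s.filter fun x => 2*x.2 = c).card ≤ 4 := by
    intro c _
    rcases (s.filter fun x => 2*x.2 = c).eq_empty_or_nonempty with he | ⟨x₀, hx₀⟩
    · simp [he]
    · have hx₀c : 2 * x₀.2 = c := (Finset.mem_filter.mp hx₀).2
      have hsub : (s.filter fun x => 2*x.2 = c) ⊆
          {((0:ZMod 2), x₀.2), (1, x₀.2), (0, x₀.2 + (n:ZMod (2*n))), (1, x₀.2 + (n:ZMod (2*n)))} := by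
        intro x hx
        have hxc : 2 * x.2 = c := (Finset.mem_filter.mp hx).2
        have h3 : 2 * (x.2 - x₀.2) = 0 := by
          rw [mul_sub, hxc, hx₀c, sub_self]
        have hsnd : x.2 = x₀.2 ∨ x.2 = x₀.2 + (n:ZMod (2*n)) := by
          rcases two_mul_eq_zero' hn _ h3 with h4 | h4
          · left; linear_combination h4
          · right; linear_combination h4
        have hfst := zmod2_cases x.1
        simp only [Finset.mem_insert, Finset.mem_singleton, Prod.ext_iff]
        rcases hfst with h5 | h5 <;> rcases hsnd with h6 | h6 <;> simp [h5, h6]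
      exact le_trans (Finset.card_le_card hsub) (card_four' _ _ _ _)
  calc ∑ c ∈ u, (s.filter fun x => 2*x.2 = c).card ≤ ∑ _c ∈ u, 4 :=
      Finset.sum_le_sum hbound
    _ = 4 * u.card := by rw [Finset.sum_const, smul_eq_mul, mul_comm]

lemma finsetSubgroup_card_dvd {M : Type*} [AddCommGroup M] [Fintype M] [DecidableEq M]
    (B : Finset M) (K : AddSubgroup M)
    (h0 : (0:M) ∈ B) (hadd : ∀ a ∈ B, ∀ b ∈ B, a + b ∈ B) (hneg : ∀ a ∈ B, -a ∈ B)
    (hK : ∀ a ∈ B, a ∈ K) : B.card ∣ Nat.card K := by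
  let Hs : AddSubgroup M :=
    { carrier := ↑B
      add_mem' := fun ha hb => hadd _ ha _ hb
      zero_mem' := h0
      neg_mem' := fun ha => hneg _ ha }
  have hle : Hs ≤ K := fun a ha => hK a ha
  have hcard : Nat.card Hs = B.card := by
    have : Nat.card Hs = Nat.card (↑B : Set M) := rfl
    rw [this, Nat.card_coe_set_eq, Set.ncard_coe_finset]
  rw [← hcard]
  exact AddSubgroup.card_dvd_of_le hle

theorem stmt_16 (n : ℕ) (hn : 3 ≤ n)
    (S : Finset (ZMod 2 × ZMod (2 * n))) (hcard : S.card = 2 * n + 1)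
    (hno : ¬ ∃ T ⊆ S, T.card = 2 * n ∧
      ∃ ε : ZMod 2 × ZMod (2 * n) → ℤ, (∀ g ∈ T, ε g = 1 ∨ ε g = -1) ∧
        ∑ g ∈ T, ε g • g = 0) :
    ∀ g ∈ S,
      {x : ZMod 2 × ZMod (2 * n) | ∃ I ⊆ S.erase g, x = 2 • ∑ a ∈ I, a} =
      {x : ZMod 2 × ZMod (2 * n) | ∃ y, x = 2 • y} := by
  haveI : NeZero (2*n) := ⟨by omega⟩
  classical
  intro g hg
  set T : Finset (ZMod 2 × ZMod (2*n)) := S.erase g with hTdef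
  have hTS : T ⊆ S := Finset.erase_subset _ _
  have hTcard : T.card = 2*n := by
    rw [hTdef, Finset.card_erase_of_mem hg, hcard]
    omega
  set f : ZMod 2 × ZMod (2*n) → ZMod (2*n) := fun t => 2 * t.2 with hfdef
  set A : Finset (ZMod (2*n)) := SSf f T with hAdef
  set K : AddSubgroup (ZMod (2*n)) := AddSubgroup.zmultiples (2 : ZMod (2*n)) with hKdef
  have hmemK : ∀ c : ZMod (2*n), 2*c ∈ K := by
    intro c
    rw [hKdef, AddSubgroup.mem_zmultiples_iff]
    refine ⟨(c.val : ℤ), ?_⟩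
    rw [zsmul_eq_mul]
    push_cast
    rw [ZMod.natCast_zmod_val]
    ring
  have hKcard : Nat.card K = n := by
    rw [hKdef, Nat.card_zmultiples]
    have h2 : (2 : ZMod (2*n)) = ((2:ℕ) : ZMod (2*n)) := by push_cast; ring
    rw [h2, ZMod.addOrderOf_coe 2 (by omega : 2*n ≠ 0)]
    have hg2 : (2*n).gcd 2 = 2 := by
      rw [Nat.gcd_comm]
      exact Nat.gcd_eq_left ⟨n, rfl⟩
    rw [hg2]
    omega
  have hAK : ∀ x ∈ A, x ∈ K := by
    intro x hx
    obtain ⟨I, hIT, rfl⟩ := mem_SSf.mp hx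
    have hs : ∑ t ∈ I, f t = 2 * ∑ t ∈ I, t.2 := by
      rw [Finset.mul_sum]
    rw [hs]
    exact hmemK _
  set Ev : Finset (ZMod (2*n)) := (K : Set (ZMod (2*n))).toFinset with hEvdef
  have hmemEv : ∀ x : ZMod (2*n), x ∈ Ev ↔ x ∈ K := by
    intro x; rw [hEvdef, Set.mem_toFinset]; rfl
  have hEvCard : Ev.card = n := by
    rw [hEvdef, Set.toFinset_card, ← Nat.card_eq_fintype_card]
    exact hKcard
  have hAEv : A ⊆ Ev := fun x hx => (hmemEv x).mpr (hAK x hx)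
  have key : A = Ev := by
    by_contra hAne
    have hAcard : A.card < n := by
      have h := Finset.card_lt_card (ssubset_of_subset_of_ne hAEv hAne)
      omega
    set St : Finset (ZMod (2*n)) := Finset.univ.filter (fun h => A.image (h + ·) = A) with hStdef
    have hStmem : ∀ h, h ∈ St ↔ A.image (h + ·) = A := by
      intro h; rw [hStdef, Finset.mem_filter]; simp
    have hst0 : (0 : ZMod (2*n)) ∈ St := by rw [hStmem]; simp
    have hstact : ∀ h ∈ St, ∀ a ∈ A, h + a ∈ A := by
      intro h hh a ha
      rw [hStmem] at hh
      rw [← hh]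
      exact Finset.mem_image_of_mem _ ha
    have hstadd : ∀ h₁ ∈ St, ∀ h₂ ∈ St, h₁ + h₂ ∈ St := by
      intro h₁ hh₁ h₂ hh₂
      rw [hStmem] at hh₁ hh₂ ⊢
      have hc : A.image ((h₁ + h₂) + ·) = (A.image (h₂ + ·)).image (h₁ + ·) := by
        rw [Finset.image_image]
        apply Finset.image_congr
        intro x _
        simp only [Function.comp_apply]
        rw [add_assoc]
      rw [hc, hh₂, hh₁]
    have hstneg : ∀ h ∈ St, -h ∈ St := by
      intro h hh
      rw [hStmem] at hh ⊢
      conv_lhs => rw [← hh]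
      rw [Finset.image_image]
      have hid : ((-h + ·) ∘ (h + ·)) = id := by funext x; simp
      rw [hid, Finset.image_id]
    have hstA : ∀ h ∈ St, h ∈ A := by
      intro h hh
      have := hstact h hh 0 (zero_mem_SSf f T)
      simpa using this
    have hcosetcard : ∀ x : ZMod (2*n), (St.image (x + ·)).card = St.card :=
      fun x => Finset.card_image_of_injective _ (add_right_injective x)
    have hcosetsub : ∀ x ∈ A, St.image (x + ·) ⊆ A := by
      intro x hx y hy
      obtain ⟨h, hh, rfl⟩ := Finset.mem_image.mp hy
      rw [add_comm]
      exact hstact h hh x hx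
    have hdisj0 : ∀ x, x ∉ St → Disjoint St (St.image (x + ·)) := by
      intro x hx
      rw [Finset.disjoint_right]
      rintro a ha haSt
      obtain ⟨h, hh, rfl⟩ := Finset.mem_image.mp ha
      apply hx
      have hx' : x = (x + h) + (-h) := by ring
      rw [hx']
      exact hstadd _ haSt _ (hstneg _ hh)
    have hcosetdisj : ∀ x y : ZMod (2*n), x - y ∉ St →
        Disjoint (St.image (x + ·)) (St.image (y + ·)) := by
      intro x y hxy
      rw [Finset.disjoint_left]
      rintro a ha1 ha2
      obtain ⟨h1, hh1, rfl⟩ := Finset.mem_image.mp ha1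
      obtain ⟨h2, hh2, heq⟩ := Finset.mem_image.mp ha2
      apply hxy
      have hxe : x - y = h2 - h1 := by linear_combination -heq
      rw [hxe, sub_eq_add_neg]
      exact hstadd _ hh2 _ (hstneg _ hh1)
    have h3coset : ∀ x y : ZMod (2*n), x ∈ A → y ∈ A → x ∉ St → y ∉ St → x - y ∉ St →
        3 * St.card ≤ A.card := by
      intro x y hxA hyA hx hy hxy
      have hd1 := hdisj0 x hx
      have hd2 := hdisj0 y hy
      have hd3 := hcosetdisj x y hxy
      have hsub : St ∪ St.image (x + ·) ∪ St.image (y + ·) ⊆ A :=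
        Finset.union_subset (Finset.union_subset (fun h hh => hstA h hh) (hcosetsub x hxA))
          (hcosetsub y hyA)
      have hcards : (St ∪ St.image (x + ·) ∪ St.image (y + ·)).card = 3 * St.card := by
        rw [Finset.card_union_of_disjoint (by rw [Finset.disjoint_union_left]; exact ⟨hd2, hd3⟩),
          Finset.card_union_of_disjoint hd1, hcosetcard, hcosetcard]
        ring
      calc 3 * St.card = _ := hcards.symm
        _ ≤ A.card := Finset.card_le_card hsub
    have h2coset : ∀ x : ZMod (2*n), x ∈ A → x ∉ St → 2 * St.card ≤ A.card := by
      intro x hxA hx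
      have hsub : St ∪ St.image (x + ·) ⊆ A :=
        Finset.union_subset (fun h hh => hstA h hh) (hcosetsub x hxA)
      have hcards : (St ∪ St.image (x + ·)).card = 2 * St.card := by
        rw [Finset.card_union_of_disjoint (hdisj0 x hx), hcosetcard]
        ring
      calc 2 * St.card = _ := hcards.symm
        _ ≤ A.card := Finset.card_le_card hsub
    have hgrow := SSf_growth f T
    rw [← hAdef] at hgrow
    have hfilteq : (T.filter fun t => ¬ (A.image (f t + ·) = A)) =
        (T.filter fun t => ¬ (f t ∈ St)) := by
      apply Finset.filter_congr
      intro t _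
      exact not_congr (Iff.symm (hStmem (f t)))
    rw [hfilteq] at hgrow
    have hsplit := Finset.card_filter_add_card_filter_not
      (s := T) (p := fun t => f t ∈ St)
    have hgoodcard : n + 2 ≤ (T.filter fun t => f t ∈ St).card := by omega
    have hStub : n + 2 ≤ 4 * St.card := by
      refine le_trans hgoodcard (card_le_four_mul' hn _ St ?_)
      intro x hx
      exact (Finset.mem_filter.mp hx).2
    have hStK : ∀ h ∈ St, h ∈ K := fun h hh => hAK h (hstA h hh)
    have hdvd : St.card ∣ n := by
      have := finsetSubgroup_card_dvd St K hst0 hstadd hstneg hStK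
      rwa [hKcard] at this
    have hStpos : 0 < St.card := Finset.card_pos.mpr ⟨0, hst0⟩
    obtain ⟨d, hd⟩ := hdvd
    have hd3 : d ≤ 3 := by
      by_contra hcon
      push_neg at hcon
      have : St.card * 4 ≤ St.card * d := Nat.mul_le_mul_left _ (by omega)
      omega
    have hd1 : 1 ≤ d := by
      rcases Nat.eq_zero_or_pos d with h | h
      · exfalso; rw [h, Nat.mul_zero] at hd; omega
      · exact h
    interval_cases d
    · -- d = 1
      have hSt_n : St.card = n := by omega
      apply hAne
      apply Finset.eq_of_subset_of_card_le hAEv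
      have hStEv : St = Ev :=
        Finset.eq_of_subset_of_card_le (fun h hh => hAEv (hstA h hh)) (by omega)
      have hEvA : Ev ⊆ A := by
        rw [← hStEv]; exact fun h hh => hstA h hh
      exact Finset.card_le_card hEvA
    · -- d = 2
      have hAeqSt : A = St := by
        refine Finset.Subset.antisymm ?_ (fun h hh => hstA h hh)
        intro x hxA
        by_contra hxSt
        have := h2coset x hxA hxSt
        omega
      have hTsubP : T ⊆ Finset.univ.filter (fun x : ZMod 2 × ZMod (2*n) => 2 * x.2 ∈ St) := by
        intro t ht
        refine Finset.mem_filter.mpr ⟨Finset.mem_univ _, ?_⟩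
        have hm : f t ∈ A := single_mem_SSf f ht
        rw [hAeqSt] at hm
        exact hm
      have hPcard : (Finset.univ.filter
          (fun x : ZMod 2 × ZMod (2*n) => 2 * x.2 ∈ St)).card ≤ 4 * St.card :=
        card_le_four_mul' hn _ St (fun x hx => (Finset.mem_filter.mp hx).2)
      have hTP : T = Finset.univ.filter (fun x : ZMod 2 × ZMod (2*n) => 2 * x.2 ∈ St) :=
        Finset.eq_of_subset_of_card_le hTsubP (by omega)
      set nc : ZMod (2*n) := ((n:ℕ) : ZMod (2*n)) with hncdef
      have hnc2 : nc + nc = 0 := by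
        rw [hncdef, ← Nat.cast_add]
        have he : ((n + n : ℕ) : ZMod (2*n)) = ((2*n : ℕ) : ZMod (2*n)) := by congr 1; omega
        rw [he, ZMod.natCast_self]
      have hncne : nc ≠ 0 := by
        rw [hncdef]
        intro h
        have := (ZMod.natCast_eq_zero_iff n (2*n)).mp h
        have := Nat.le_of_dvd (by omega) this
        omega
      have hTmem : ∀ p : ZMod 2 × ZMod (2*n), p ∈ T ↔ 2 * p.2 ∈ St := by
        intro p
        rw [Finset.ext_iff.mp hTP p, Finset.mem_filter]
        simp
      have hmemT : ∀ p : ZMod 2 × ZMod (2*n), 2 * p.2 ∈ St → p ∈ T :=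
        fun p hp => (hTmem p).mpr hp
      have h2nc : 2 * nc = 0 := by rw [two_mul nc]; exact hnc2
      have hfix : ∀ p : ZMod 2 × ZMod (2*n), -p = p → p.2 = 0 ∨ p.2 = nc := by
        intro p hp
        have hs : p.2 + p.2 = 0 := by
          have h2 := congrArg Prod.snd hp
          simp only [Prod.snd_neg] at h2
          linear_combination -h2
        have h2p : 2 * p.2 = 0 := by rw [two_mul p.2]; exact hs
        exact two_mul_eq_zero' hn _ h2p
      have hsumT : ∑ x ∈ T, x = 0 := by
        set F : Finset (ZMod 2 × ZMod (2*n)) :=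
          {((0:ZMod 2), (0:ZMod (2*n))), ((1:ZMod 2), (0:ZMod (2*n))),
           ((0:ZMod 2), nc), ((1:ZMod 2), nc)} with hFdef
        have hmemF : ∀ p : ZMod 2 × ZMod (2*n), p ∈ F ↔ (p.2 = 0 ∨ p.2 = nc) := by
          intro p
          rw [hFdef]
          simp only [Finset.mem_insert, Finset.mem_singleton, Prod.ext_iff]
          constructor
          · rintro (⟨h1,h2⟩|⟨h1,h2⟩|⟨h1,h2⟩|⟨h1,h2⟩) <;> simp [h2]
          · rintro (h2 | h2) <;> rcases zmod2_cases p.1 with h1 | h1 <;> tauto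
        have hFT : F ⊆ T := by
          intro p hp
          rcases (hmemF p).mp hp with h | h
          · apply hmemT; rw [h, mul_zero]; exact hst0
          · apply hmemT; rw [h, h2nc]; exact hst0
        have hnegF : ∀ p ∈ F, -p ∈ F := by
          intro p hp
          rw [hmemF] at hp ⊢
          rcases hp with h | h
          · left; show -p.2 = 0; rw [h, neg_zero]
          · right; show -p.2 = nc; rw [h]; exact neg_eq_of_add_eq_zero_left hnc2
        have h01 : (0:ZMod 2) ≠ 1 := by decide
        have h10 : (1:ZMod 2) ≠ 0 := by decide
        have hsumF : ∑ x ∈ F, x = 0 := by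
          rw [hFdef]
          rw [Finset.sum_insert (by
              simp only [Finset.mem_insert, Finset.mem_singleton, Prod.mk.injEq, not_or]
              refine ⟨?_, ?_, ?_⟩ <;> rintro ⟨h1, h2⟩
              · exact h01 h1
              · exact hncne h2.symm
              · exact h01 h1),
            Finset.sum_insert (by
              simp only [Finset.mem_insert, Finset.mem_singleton, Prod.mk.injEq, not_or]
              refine ⟨?_, ?_⟩ <;> rintro ⟨h1, h2⟩ <;> exact hncne h2.symm),
            Finset.sum_pair (by
              intro hh
              exact h01 (congrArg Prod.fst hh))]
          rw [Prod.ext_iff]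
          constructor
          · show (0:ZMod 2) + (1 + (0 + 1)) = 0
            decide
          · show (0:ZMod (2*n)) + (0 + (nc + nc)) = 0
            rw [hnc2]; ring
        have hTF : ∑ x ∈ T \ F, x = 0 := by
          apply Finset.sum_involution (g := fun a _ => -a)
          · intro a _
            exact add_neg_cancel a
          · intro a ha _
            intro heq
            have haF : a ∉ F := (Finset.mem_sdiff.mp ha).2
            exact haF ((hmemF a).mpr (hfix a heq))
          · intro a ha
            simp
          · intro a ha
            show -a ∈ T \ F
            rw [Finset.mem_sdiff] at ha ⊢
            constructor
            · apply hmemT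
              have h2a : 2 * a.2 ∈ St := (hTmem a).mp ha.1
              have hng : 2 * (-a).2 = -(2 * a.2) := by
                show 2 * (-a.2) = _
                ring
              rw [hng]
              exact hstneg _ h2a
            · intro hmem
              apply ha.2
              have := hnegF _ hmem
              simpa using this
        rw [← Finset.sum_sdiff hFT, hTF, hsumF, add_zero]
      exact absurd ⟨T, hTS, hTcard, fun _ => (1:ℤ), fun g' _ => Or.inl rfl,
        by simpa using hsumT⟩ hno
    · -- d = 3
      have hin : (T.filter fun t => f t ∈ St).card ≤ 4 * St.card :=
        card_le_four_mul' hn _ St (fun x hx => (Finset.mem_filter.mp hx).2)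
      have houtcard : 1 < (T.filter fun t => ¬ (f t ∈ St)).card := by omega
      obtain ⟨t₁, ht₁, t₂, ht₂, htne⟩ := Finset.one_lt_card.mp houtcard
      have ht₁T : t₁ ∈ T := (Finset.mem_filter.mp ht₁).1
      have ht₂T : t₂ ∈ T := (Finset.mem_filter.mp ht₂).1
      have hu : f t₁ ∈ A := single_mem_SSf f ht₁T
      have hv : f t₂ ∈ A := single_mem_SSf f ht₂T
      have huv : f t₁ + f t₂ ∈ A := pair_mem_SSf f ht₁T ht₂T htne
      have huSt : ¬ (f t₁ ∈ St) := (Finset.mem_filter.mp ht₁).2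
      have hvSt : ¬ (f t₂ ∈ St) := (Finset.mem_filter.mp ht₂).2
      have h1 : f t₁ + f t₂ ∈ St := by
        by_contra hw
        have hsubd : f t₁ - (f t₁ + f t₂) ∉ St := by
          intro hmem
          apply hvSt
          have hvz : f t₂ = -(f t₁ - (f t₁ + f t₂)) := by ring
          rw [hvz]
          exact hstneg _ hmem
        have := h3coset (f t₁) (f t₁ + f t₂) hu huv huSt hw hsubd
        omega
      have h2 : f t₁ - f t₂ ∈ St := by
        by_contra hw
        have := h3coset (f t₁) (f t₂) hu hv huSt hvSt hw
        omega
      have h2u : f t₁ + f t₁ ∈ St := by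
        have huu : f t₁ + f t₁ = (f t₁ + f t₂) + (f t₁ - f t₂) := by ring
        rw [huu]
        exact hstadd _ h1 _ h2
      set B : Finset (ZMod (2*n)) := St ∪ St.image (f t₁ + ·) with hBdef
      have hB0 : (0 : ZMod (2*n)) ∈ B := Finset.mem_union_left _ hst0
      have hmemB : ∀ x, x ∈ B ↔ (x ∈ St ∨ ∃ h ∈ St, f t₁ + h = x) := by
        intro x
        rw [hBdef, Finset.mem_union, Finset.mem_image]
      have hBadd : ∀ a ∈ B, ∀ b ∈ B, a + b ∈ B := by
        intro a ha b hb
        rw [hmemB] at ha hb ⊢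
        rcases ha with ha | ⟨h1', hh1, rfl⟩ <;> rcases hb with hb | ⟨h2', hh2, rfl⟩
        · exact Or.inl (hstadd _ ha _ hb)
        · right; exact ⟨h2' + a, hstadd _ hh2 _ ha, by ring⟩
        · right; exact ⟨h1' + b, hstadd _ hh1 _ hb, by ring⟩
        · left
          have hcomb : (f t₁ + h1') + (f t₁ + h2') = (f t₁ + f t₁) + (h1' + h2') := by ring
          rw [hcomb]
          exact hstadd _ h2u _ (hstadd _ hh1 _ hh2)
      have hBneg : ∀ a ∈ B, -a ∈ B := by
        intro a ha
        rw [hmemB] at ha ⊢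
        rcases ha with ha | ⟨h', hh, rfl⟩
        · exact Or.inl (hstneg _ ha)
        · right
          exact ⟨-(f t₁ + f t₁) + -h', hstadd _ (hstneg _ h2u) _ (hstneg _ hh), by ring⟩
      have hBK : ∀ a ∈ B, a ∈ K := by
        intro a ha
        rw [hmemB] at ha
        rcases ha with ha | ⟨h', hh, rfl⟩
        · exact hStK _ ha
        · exact K.add_mem (hmemK t₁.2) (hStK _ hh)
      have hBcard : B.card = 2 * St.card := by
        rw [hBdef, Finset.card_union_of_disjoint (hdisj0 _ huSt), hcosetcard]
        ring
      have hBdvd : B.card ∣ n := by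
        have := finsetSubgroup_card_dvd B K hB0 hBadd hBneg hBK
        rwa [hKcard] at this
      rw [hBcard] at hBdvd
      have hdvd2 : 2 * St.card ∣ St.card := by
        have hsub := Nat.dvd_sub hBdvd (dvd_refl (2 * St.card))
        have he : n - 2 * St.card = St.card := by omega
        rwa [he] at hsub
      have := Nat.le_of_dvd hStpos hdvd2
      omega
  -- conclusion
  ext x
  simp only [Set.mem_setOf_eq]
  constructor
  · rintro ⟨I, hIT, rfl⟩
    exact ⟨∑ a ∈ I, a, rfl⟩
  · rintro ⟨y, rfl⟩
    have h2y : (2 * y.2) ∈ A := by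
      rw [key]
      exact (hmemEv _).mpr (hmemK y.2)
    obtain ⟨I, hIT, hIsum⟩ := mem_SSf.mp h2y
    refine ⟨I, hIT, ?_⟩
    have hsmul : ∀ z : ZMod 2 × ZMod (2*n), 2 • z = ((0:ZMod 2), 2 * z.2) := by
      intro z
      rw [two_nsmul]
      have hz1 : z.1 + z.1 = 0 := by
        rcases zmod2_cases z.1 with h | h <;> rw [h] <;> decide
      rw [Prod.ext_iff]
      constructor
      · show z.1 + z.1 = 0
        exact hz1
      · show z.2 + z.2 = 2 * z.2
        rw [two_mul z.2]
    rw [hsmul y, hsmul (∑ a ∈ I, a)]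
    rw [Prod.mk.injEq]
    refine ⟨rfl, ?_⟩
    calc 2 * y.2 = ∑ t ∈ I, f t := hIsum.symm
      _ = 2 * ∑ t ∈ I, t.2 := by rw [Finset.mul_sum]
      _ = 2 * (∑ a ∈ I, a).2 := by rw [Prod.snd_sum]
end

section
/- Let G = C_2 ⊕ C_{2n} with n ≥ 2. Then the plus-minus weighted Erdős–Ginzburg–Ziv constant of G equals 2n + ⌊log₂(2n)⌋ + 1. -/
open Multiset

namespace EGZaux

variable {n : ℕ}

/-- `Good U` : `U` has a plus-minus weighted zero-sum. -/
def Good (U : Multiset (ZMod 2 × ZMod (2*n))) : Prop :=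
  ∃ A B, U = A + B ∧ A.sum = B.sum

lemma Good.zero : Good (0 : Multiset (ZMod 2 × ZMod (2*n))) := ⟨0, 0, by simp, rfl⟩

lemma Good.add {U V : Multiset (ZMod 2 × ZMod (2*n))} (hU : Good U) (hV : Good V) :
    Good (U + V) := by
  obtain ⟨A, B, rfl, h1⟩ := hU
  obtain ⟨C, D, rfl, h2⟩ := hV
  exact ⟨A + C, B + D, by rw [add_add_add_comm], by simp [h1, h2]⟩

lemma Good.sum {M : Multiset (Multiset (ZMod 2 × ZMod (2*n)))}
    (h : ∀ p ∈ M, Good p) : Good M.sum := by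
  induction M using Multiset.induction with
  | empty => simpa using Good.zero
  | cons a s ih =>
    rw [Multiset.sum_cons]
    exact (h a (mem_cons_self a s)).add (ih fun p hp => h p (mem_cons_of_mem hp))

lemma Good.pair_same (x : ZMod 2 × ZMod (2*n)) : Good ({x, x} : Multiset _) :=
  ⟨{x}, {x}, rfl, rfl⟩

lemma Good.pair_neg (x : ZMod 2 × ZMod (2*n)) : Good ({x, -x} : Multiset _) :=
  ⟨{x, -x}, 0, by simp, by simp⟩

/-- flipping the sign of one element preserves Good. -/
lemma Good.flip {V : Multiset (ZMod 2 × ZMod (2*n))} {x : ZMod 2 × ZMod (2*n)}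
    (h : Good (x ::ₘ V)) : Good ((-x) ::ₘ V) := by
  classical
  obtain ⟨A, B, hAB, hs⟩ := h
  have hx : x ∈ A + B := by rw [← hAB]; exact mem_cons_self x V
  rcases mem_add.1 hx with hxA | hxB
  · refine ⟨A.erase x, (-x) ::ₘ B, ?_, ?_⟩
    · have : (x ::ₘ V).erase x = V := erase_cons_head x V
      rw [← this, hAB, Multiset.erase_add_left_pos _ hxA]
      rw [add_comm, ← Multiset.cons_add, add_comm]
    · have h1 : x + (A.erase x).sum = A.sum := Multiset.sum_erase hxA
      rw [Multiset.sum_cons]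
      have : (A.erase x).sum = A.sum - x := by rw [← h1]; ring
      rw [this, hs]; ring
  · refine ⟨(-x) ::ₘ A, B.erase x, ?_, ?_⟩
    · have : (x ::ₘ V).erase x = V := erase_cons_head x V
      rw [← this, hAB, Multiset.erase_add_right_pos _ hxB, ← Multiset.cons_add]
    · have h1 : x + (B.erase x).sum = B.sum := Multiset.sum_erase hxB
      rw [Multiset.sum_cons]
      have : (B.erase x).sum = B.sum - x := by rw [← h1]; ring
      rw [this, hs]; ring

lemma Good.flex {V : Multiset (ZMod 2 × ZMod (2*n))} {x r : ZMod 2 × ZMod (2*n)}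
    (hr : r = x ∨ r = -x) (h : Good (x ::ₘ V)) : Good (r ::ₘ V) := by
  rcases hr with rfl | rfl
  · exact h
  · exact h.flip

/-- take a submultiset of exact size -/
lemma exists_le_card {α : Type*} (S : Multiset α) (m : ℕ) (h : m ≤ card S) :
    ∃ S' ≤ S, card S' = m := by
  refine ⟨(S.toList.take m : List α), ?_, ?_⟩
  · conv_rhs => rw [← S.coe_toList]
    exact (List.take_sublist m S.toList).subperm
  · simp [List.length_take]
    omega

lemma card_msum {α : Type*} (M : Multiset (Multiset α)) :
    card M.sum = (M.map card).sum := by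
  induction M using Multiset.induction with
  | empty => simp
  | cons a s ih => simp [ih]

lemma sum_le_sum_of_le {α : Type*} {M M' : Multiset (Multiset α)} (h : M' ≤ M) :
    M'.sum ≤ M.sum := by
  obtain ⟨C, rfl⟩ := Multiset.le_iff_exists_add.1 h
  simp


lemma fin_univ_val_map {α : Type*} (l : List α) :
    (Finset.univ.val : Multiset (Fin l.length)).map l.get = ↑l := by
  have h2 : (Finset.univ.val : Multiset (Fin l.length)) = ↑(List.finRange l.length) := by
    simp [Fin.univ_def]
  rw [h2, Multiset.map_coe]
  exact congrArg _ (List.map_get_finRange l)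

/-- Pigeonhole: any `k+3` elements contain a nonempty even-size signed zero-sum. -/
lemma lemB (hn : 2 ≤ n) (R : Multiset (ZMod 2 × ZMod (2*n)))
    (hR : Nat.log 2 (2*n) + 3 ≤ card R) :
    ∃ U ≤ R, U ≠ 0 ∧ Even (card U) ∧ card U ≤ Nat.log 2 (2*n) + 3 ∧ Good U := by
  classical
  haveI : NeZero (2*n) := ⟨by omega⟩
  set k := Nat.log 2 (2*n) with hk
  obtain ⟨R', hR'le, hR'card⟩ := exists_le_card R (k+3) hR
  set l := R'.toList with hl
  have hlen : l.length = k + 3 := by rw [hl, Multiset.length_toList, hR'card]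
  -- pigeonhole
  have hcard : Fintype.card (ZMod 2 × ZMod 2 × ZMod (2*n)) <
      Fintype.card (Finset (Fin l.length)) := by
    rw [Fintype.card_finset, Fintype.card_fin, hlen]
    have h1 : 2*n < 2 ^ (k+1) := Nat.lt_pow_succ_log_self (by norm_num) (2*n)
    simp only [Fintype.card_prod, ZMod.card]
    have : 2 * (2 * (2*n)) < 2 * (2 * 2^(k+1)) := by omega
    calc 2 * (2 * (2*n)) < 2 * (2 * 2^(k+1)) := this
    _ = 2 ^ (k+3) := by ring
  obtain ⟨X, Y, hne, heq⟩ := Fintype.exists_ne_map_eq_of_card_lt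
    (fun X : Finset (Fin l.length) => ((X.card : ZMod 2), ∑ i ∈ X, l.get i)) hcard
  have heq1 : ((X.card : ℕ) : ZMod 2) = (Y.card : ZMod 2) := congrArg Prod.fst heq
  have heq2 : ∑ i ∈ X, l.get i = ∑ i ∈ Y, l.get i := congrArg Prod.snd heq
  set A := (X \ Y).val.map l.get with hA
  set B := (Y \ X).val.map l.get with hB
  have hdisj : Disjoint (X \ Y) (Y \ X) := disjoint_sdiff_sdiff
  have hcAB : card (A + B) = (X \ Y).card + (Y \ X).card := by
    rw [card_add, hA, hB, card_map, card_map]; rfl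
  refine ⟨A + B, ?_, ?_, ?_, ?_, A, B, rfl, ?_⟩
  · -- A + B ≤ R
    have h1 : A + B = ((X \ Y).disjUnion (Y \ X) hdisj).val.map l.get := by
      rw [hA, hB, ← Multiset.map_add]; rfl
    have h2 : ((X \ Y).disjUnion (Y \ X) hdisj).val ≤ (Finset.univ : Finset (Fin l.length)).val :=
      Finset.val_le_iff.2 (Finset.subset_univ _)
    calc A + B ≤ (Finset.univ.val : Multiset (Fin l.length)).map l.get := by
          rw [h1]; exact Multiset.map_le_map h2
      _ = ↑l := fin_univ_val_map l
      _ = R' := Multiset.coe_toList R'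
      _ ≤ R := hR'le
  · -- nonzero
    intro h0
    have : (X \ Y).card + (Y \ X).card = 0 := by
      have := congrArg card h0
      rw [hcAB] at this; simpa using this
    have hXY : X ⊆ Y := Finset.sdiff_eq_empty_iff_subset.1 (Finset.card_eq_zero.1 (by omega))
    have hYX : Y ⊆ X := Finset.sdiff_eq_empty_iff_subset.1 (Finset.card_eq_zero.1 (by omega))
    exact hne (Finset.Subset.antisymm hXY hYX)
  · -- even card
    have hmod : X.card % 2 = Y.card % 2 := by
      have := (ZMod.natCast_eq_natCast_iff X.card Y.card 2).1 heq1
      simpa [Nat.ModEq] using this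
    have h1 : (X \ Y).card + (X ∩ Y).card = X.card := Finset.card_sdiff_add_card_inter X Y
    have h2 : (Y \ X).card + (Y ∩ X).card = Y.card := Finset.card_sdiff_add_card_inter Y X
    have h3 : (X ∩ Y).card = (Y ∩ X).card := by rw [Finset.inter_comm]
    rw [hcAB, Nat.even_iff]
    omega
  · -- card bound
    rw [hcAB, ← Finset.card_disjUnion _ _ hdisj]
    calc ((X \ Y).disjUnion (Y \ X) hdisj).card ≤ Fintype.card (Fin l.length) :=
        Finset.card_le_univ _
      _ = k + 3 := by rw [Fintype.card_fin, hlen]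
  · -- sums equal
    have hsub1 : X ∩ Y ⊆ X := Finset.inter_subset_left
    have hsub2 : Y ∩ X ⊆ Y := Finset.inter_subset_left
    have e1 : ∑ i ∈ X \ (X ∩ Y), l.get i = ∑ i ∈ X, l.get i - ∑ i ∈ X ∩ Y, l.get i :=
      Finset.sum_sdiff_eq_sub hsub1
    have e2 : ∑ i ∈ Y \ (Y ∩ X), l.get i = ∑ i ∈ Y, l.get i - ∑ i ∈ Y ∩ X, l.get i :=
      Finset.sum_sdiff_eq_sub hsub2
    rw [Finset.sdiff_inter_self_left] at e1 e2
    have hAs : A.sum = ∑ i ∈ X \ Y, l.get i := (Finset.sum_eq_multiset_sum _ _).symm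
    have hBs : B.sum = ∑ i ∈ Y \ X, l.get i := (Finset.sum_eq_multiset_sum _ _).symm
    rw [hAs, hBs, e1, e2, heq2, Finset.inter_comm]


/-- Greedy accumulation of even zero-sum pieces. -/
lemma lemC (hn : 2 ≤ n) (w : ℕ) (hw : Even w) (R : Multiset (ZMod 2 × ZMod (2*n)))
    (hcard : w + (Nat.log 2 (2*n) + 1) ≤ card R) :
    ∃ U ≤ R, Good U ∧ Even (card U) ∧ w ≤ card U ∧
      card U ≤ w + 2*((Nat.log 2 (2*n)+1)/2) := by
  induction w using Nat.strong_induction_on generalizing R with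
  | _ w ih =>
  set k := Nat.log 2 (2*n) with hk
  rcases Nat.eq_zero_or_pos w with rfl | hpos
  · exact ⟨0, Multiset.zero_le R, Good.zero, by simp, by simp, by simp⟩
  have hwmod : w % 2 = 0 := Nat.even_iff.1 hw
  have hw2 : 2 ≤ w := by omega
  obtain ⟨V, hVR, hV0, hVeven, hVle, hVgood⟩ := lemB hn R (by omega)
  have hVmod : card V % 2 = 0 := Nat.even_iff.1 hVeven
  have hVpos : 1 ≤ card V := by
    rcases Nat.eq_zero_or_pos (card V) with h0 | h
    · exact absurd (card_eq_zero.1 h0) hV0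
    · exact h
  by_cases hcase : w ≤ card V
  · exact ⟨V, hVR, hVgood, hVeven, hcase, by omega⟩
  · obtain ⟨U', hU'le, hU'good, hU'even, hU'lo, hU'hi⟩ :=
      ih (w - card V) (by omega) (Nat.even_iff.2 (by omega)) (R - V)
        (by rw [Multiset.card_sub hVR]; omega)
    have hU'mod : card U' % 2 = 0 := Nat.even_iff.1 hU'even
    refine ⟨U' + V, ?_, hU'good.add hVgood, ?_, ?_, ?_⟩
    · calc U' + V ≤ (R - V) + V := add_le_add hU'le (le_refl V)
        _ = R := tsub_add_cancel_of_le hVR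
    · rw [card_add]; exact Nat.even_iff.2 (by omega)
    · rw [card_add]; omega
    · rw [card_add]; omega

/-- canonical representative of `{b, -b}` -/
def cc (n : ℕ) (b : ZMod (2*n)) : ZMod (2*n) := if n < b.val then -b else b

/-- canonical representative of the class `{x, -x}` -/
def cl (n : ℕ) (x : ZMod 2 × ZMod (2*n)) : ZMod 2 × ZMod (2*n) := (x.1, cc n x.2)

lemma neg_zmod2 (a : ZMod 2) : -a = a := by fin_cases a <;> rfl

lemma cc_spec (b : ZMod (2*n)) : cc n b = b ∨ cc n b = -b := by
  unfold cc; split <;> simp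

lemma cc_val_le (hn : 2 ≤ n) (b : ZMod (2*n)) : (cc n b).val ≤ n := by
  haveI : NeZero (2*n) := ⟨by omega⟩
  unfold cc
  by_cases h : n < b.val
  · rw [if_pos h, ZMod.neg_val]
    have hb : b ≠ 0 := by
      intro h0; rw [h0, ZMod.val_zero] at h; omega
    rw [if_neg hb]
    have := ZMod.val_lt b
    omega
  · rw [if_neg h]; omega

lemma cc_neg (hn : 2 ≤ n) (b : ZMod (2*n)) : cc n (-b) = cc n b := by
  haveI : NeZero (2*n) := ⟨by omega⟩
  by_cases hb : b = 0
  · simp [hb]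
  have hval : b.val < 2*n := ZMod.val_lt b
  have hv0 : b.val ≠ 0 := fun h => hb ((ZMod.val_eq_zero b).1 h)
  have hvneg : (-b).val = 2*n - b.val := by
    rw [ZMod.neg_val, if_neg hb]
  unfold cc
  by_cases h1 : n < b.val
  · rw [if_neg (by omega), if_pos h1]
  · by_cases h2 : n < (-b).val
    · rw [if_pos h2, if_neg h1, neg_neg]
    · have hveq : (-b).val = b.val := by omega
      have : -b = b := ZMod.val_injective _ hveq
      rw [if_neg h2, if_neg h1, this]

lemma cc_eq_iff (hn : 2 ≤ n) (b b' : ZMod (2*n)) :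
    cc n b = cc n b' ↔ (b = b' ∨ b = -b') := by
  constructor
  · intro h
    rcases cc_spec (n := n) b with h1 | h1 <;> rcases cc_spec (n := n) b' with h2 | h2 <;>
      rw [h1, h2] at h
    · exact Or.inl h
    · exact Or.inr h
    · exact Or.inr (by rw [← h, neg_neg])
    · exact Or.inl (neg_injective h)
  · rintro (rfl | rfl)
    · rfl
    · exact cc_neg hn b'

lemma cl_eq_iff (hn : 2 ≤ n) (x y : ZMod 2 × ZMod (2*n)) :
    cl n x = cl n y ↔ (x = y ∨ x = -y) := by
  unfold cl
  rw [Prod.ext_iff, Prod.ext_iff, Prod.ext_iff]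
  simp only [Prod.fst_neg, Prod.snd_neg, neg_zmod2]
  rw [cc_eq_iff hn]
  constructor
  · rintro ⟨h1, h2 | h2⟩
    · exact Or.inl ⟨h1, h2⟩
    · exact Or.inr ⟨h1, h2⟩
  · rintro (⟨h1, h2⟩ | ⟨h1, h2⟩)
    · exact ⟨h1, Or.inl h2⟩
    · exact ⟨h1, Or.inr h2⟩

/-- there are at most `2n+2` classes -/
lemma image_cl_card [NeZero (2*n)] (hn : 2 ≤ n) :
    ((Finset.univ : Finset (ZMod 2 × ZMod (2*n))).image (cl n)).card ≤ 2*n + 2 := by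
  classical
  set Fv := (Finset.univ : Finset (ZMod (2*n))).filter (fun b => b.val ≤ n) with hFv
  have hsub : ((Finset.univ : Finset (ZMod 2 × ZMod (2*n))).image (cl n)) ⊆
      (Finset.univ : Finset (ZMod 2)) ×ˢ Fv := by
    intro y hy
    obtain ⟨x, -, rfl⟩ := Finset.mem_image.1 hy
    exact Finset.mem_product.2 ⟨Finset.mem_univ _,
      Finset.mem_filter.2 ⟨Finset.mem_univ _, cc_val_le hn x.2⟩⟩
  have hFvcard : Fv.card ≤ n + 1 := by
    have h := Finset.card_le_card_of_injOn (s := Fv) (t := Finset.range (n+1))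
      (fun b : ZMod (2*n) => b.val)
      (fun b hb => Finset.mem_range.2
        (show b.val < n + 1 from Nat.lt_succ_of_le (Finset.mem_filter.1 hb).2))
      (fun a _ b _ h => ZMod.val_injective _ h)
    simpa using h
  calc ((Finset.univ : Finset (ZMod 2 × ZMod (2*n))).image (cl n)).card
      ≤ ((Finset.univ : Finset (ZMod 2)) ×ˢ Fv).card := Finset.card_le_card hsub
    _ = 2 * Fv.card := by
        rw [Finset.card_product, Finset.card_univ, ZMod.card]
    _ ≤ 2*n + 2 := by omega

lemma nodup_cl_card_le [NeZero (2*n)] (hn : 2 ≤ n) (M : Multiset (ZMod 2 × ZMod (2*n)))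
    (h : (M.map (cl n)).Nodup) : card M ≤ 2*n + 2 := by
  classical
  have h1 : (M.map (cl n)).toFinset.card = card (M.map (cl n)) :=
    Multiset.toFinset_card_of_nodup h
  have h2 : (M.map (cl n)).toFinset ⊆ (Finset.univ.image (cl n)) := by
    intro y hy
    obtain ⟨x, -, rfl⟩ := Multiset.mem_map.1 (Multiset.mem_toFinset.1 hy)
    exact Finset.mem_image.2 ⟨x, Finset.mem_univ _, rfl⟩
  have := Finset.card_le_card h2
  rw [h1, card_map] at this
  exact le_trans this (image_cl_card hn)

lemma cl_coverage [NeZero (2*n)] (hn : 2 ≤ n) (M : Multiset (ZMod 2 × ZMod (2*n)))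
    (h : (M.map (cl n)).Nodup) (hc : card M = 2*n + 2)
    (g : ZMod 2 × ZMod (2*n)) : ∃ r ∈ M, cl n r = cl n g := by
  classical
  have h1 : (M.map (cl n)).toFinset.card = card (M.map (cl n)) :=
    Multiset.toFinset_card_of_nodup h
  have h2 : (M.map (cl n)).toFinset ⊆ (Finset.univ.image (cl n)) := by
    intro y hy
    obtain ⟨x, -, rfl⟩ := Multiset.mem_map.1 (Multiset.mem_toFinset.1 hy)
    exact Finset.mem_image.2 ⟨x, Finset.mem_univ _, rfl⟩
  have heq : (M.map (cl n)).toFinset = Finset.univ.image (cl n) :=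
    Finset.eq_of_subset_of_card_le h2 (by
      rw [h1, card_map, hc]; exact image_cl_card hn)
  have : cl n g ∈ (M.map (cl n)).toFinset := by
    rw [heq]; exact Finset.mem_image.2 ⟨g, Finset.mem_univ _, rfl⟩
  obtain ⟨r, hr, hrg⟩ := Multiset.mem_map.1 (Multiset.mem_toFinset.1 this)
  exact ⟨r, hr, hrg⟩


lemma good_pair_of_cl (hn : 2 ≤ n) {x y : ZMod 2 × ZMod (2*n)} (h : cl n x = cl n y) :
    Good ({x, y} : Multiset _) := by
  rcases (cl_eq_iff hn x y).1 h with rfl | rfl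
  · exact Good.pair_same _
  · have : ({-y, y} : Multiset (ZMod 2 × ZMod (2*n))) = {y, -y} := Multiset.cons_swap _ _ _
    rw [this]
    exact Good.pair_neg y

lemma decomp (hn : 2 ≤ n) (S : Multiset (ZMod 2 × ZMod (2*n))) :
    ∃ (Bl : Multiset (Multiset (ZMod 2 × ZMod (2*n)))) (R : Multiset (ZMod 2 × ZMod (2*n))),
      S = Bl.sum + R ∧ (∀ p ∈ Bl, Good p ∧ card p = 2) ∧ (R.map (cl n)).Nodup := by
  classical
  induction S using Multiset.strongInductionOn with
  | ih S ih =>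
  by_cases hnd : (S.map (cl n)).Nodup
  · exact ⟨0, S, by simp, by simp, hnd⟩
  · obtain ⟨a, ha⟩ : ∃ a, 2 ≤ count a (S.map (cl n)) := by
      by_contra hcon
      push_neg at hcon
      exact hnd (Multiset.nodup_iff_count_le_one.2 (fun a => by have := hcon a; omega))
    have hamem : a ∈ S.map (cl n) := by
      rw [← Multiset.count_pos]; omega
    obtain ⟨x, hxS, hxa⟩ := Multiset.mem_map.1 hamem
    obtain ⟨S₁, rfl⟩ := Multiset.exists_cons_of_mem hxS
    have hcount : count a ((x ::ₘ S₁).map (cl n)) = count a (S₁.map (cl n)) + 1 := by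
      rw [Multiset.map_cons, hxa, Multiset.count_cons_self]
    have hamem1 : a ∈ S₁.map (cl n) := by
      rw [← Multiset.count_pos]; omega
    obtain ⟨y, hyS, hya⟩ := Multiset.mem_map.1 hamem1
    obtain ⟨S₂, rfl⟩ := Multiset.exists_cons_of_mem hyS
    obtain ⟨Bl₂, R₂, hdec, hgood, hnodup⟩ := ih S₂
      (lt_trans (Multiset.lt_cons_self S₂ y) (Multiset.lt_cons_self (y ::ₘ S₂) x))
    refine ⟨({x, y} : Multiset _) ::ₘ Bl₂, R₂, ?_, ?_, hnodup⟩
    · rw [Multiset.sum_cons, hdec]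
      rw [add_assoc]
      simp [Multiset.insert_eq_cons, Multiset.cons_add]
    · intro p hp
      rcases Multiset.mem_cons.1 hp with rfl | hp2
      · exact ⟨good_pair_of_cl hn (hxa.trans hya.symm), rfl⟩
      · exact hgood p hp2

lemma Good.flex_head {W : Multiset (ZMod 2 × ZMod (2*n))} {x r : ZMod 2 × ZMod (2*n)}
    (hr : r = x ∨ r = -x) (h : Good ({x} + W)) : Good ({r} + W) := by
  rw [Multiset.singleton_add] at h ⊢
  rcases hr with rfl | rfl
  · exact h
  · exact h.flip

lemma Good.flex_mid {V W : Multiset (ZMod 2 × ZMod (2*n))} {x r : ZMod 2 × ZMod (2*n)}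
    (hr : r = x ∨ r = -x) (h : Good (V + {x} + W)) : Good (V + {r} + W) := by
  have e : ∀ y : ZMod 2 × ZMod (2*n), V + {y} + W = {y} + (V + W) := by
    intro y
    rw [add_right_comm, add_comm (V + W) _]
  rw [e] at h
  rw [e]
  exact Good.flex_head hr h

lemma Good.flex_tail {V : Multiset (ZMod 2 × ZMod (2*n))} {x r : ZMod 2 × ZMod (2*n)}
    (hr : r = x ∨ r = -x) (h : Good (V + {x})) : Good (V + {r}) := by
  have e : ∀ y : ZMod 2 × ZMod (2*n), V + {y} = {y} + V := fun y => add_comm _ _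
  rw [e] at h; rw [e]
  exact Good.flex_head hr h

lemma good_quad (x y : ZMod (2*n)) :
    Good ({((0:ZMod 2),x)} + {((1:ZMod 2),y)} + {((1:ZMod 2),x)} + {((0:ZMod 2),y)}) := by
  refine ⟨{((0:ZMod 2),x)} + {((1:ZMod 2),y)}, {((1:ZMod 2),x)} + {((0:ZMod 2),y)}, ?_, ?_⟩
  · rw [add_assoc]
  · simp [Prod.ext_iff]

lemma good_quad_flex (hn : 2 ≤ n) {r1 r2 r3 r4 : ZMod 2 × ZMod (2*n)} (x y : ZMod (2*n))
    (h1 : cl n r1 = cl n ((0:ZMod 2), x)) (h2 : cl n r2 = cl n ((1:ZMod 2), y))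
    (h3 : cl n r3 = cl n ((1:ZMod 2), x)) (h4 : cl n r4 = cl n ((0:ZMod 2), y)) :
    Good ({r1} + {r2} + {r3} + {r4}) := by
  have e1 := (cl_eq_iff hn _ _).1 h1
  have e2 := (cl_eq_iff hn _ _).1 h2
  have e3 := (cl_eq_iff hn _ _).1 h3
  have e4 := (cl_eq_iff hn _ _).1 h4
  have s4 : Good ({((0:ZMod 2),x)} + {((1:ZMod 2),y)} + {((1:ZMod 2),x)} + {r4}) :=
    Good.flex_tail e4 (good_quad x y)
  have s3 : Good ({((0:ZMod 2),x)} + {((1:ZMod 2),y)} + {r3} + {r4}) :=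
    Good.flex_mid e3 s4
  have s2 : Good ({((0:ZMod 2),x)} + {r2} + ({r3} + {r4})) := by
    have := Good.flex_mid (V := {((0:ZMod 2),x)}) (W := {r3} + {r4}) e2 (by
      rw [← add_assoc]; exact s3)
    exact this
  have s1 : Good ({r1} + ({r2} + ({r3} + {r4}))) := by
    have := Good.flex_head (W := {r2} + ({r3} + {r4})) e1 (by
      rw [← add_assoc]; exact s2)
    exact this
  rw [← add_assoc, ← add_assoc] at s1
  exact s1

lemma le_of_nodup_subset {α : Type*} [DecidableEq α] {T R : Multiset α}
    (hnd : T.Nodup) (hsub : ∀ x ∈ T, x ∈ R) : T ≤ R := by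
  rw [Multiset.le_iff_count]
  intro a
  by_cases ha : a ∈ T
  · have h1 : count a T ≤ 1 := Multiset.nodup_iff_count_le_one.1 hnd a
    have h2 : 1 ≤ count a R := Multiset.count_pos.2 (hsub a ha)
    omega
  · simp [Multiset.count_eq_zero_of_notMem ha]

/-- Case 3: `R` has one element in each class; build `n/2` disjoint good quads. -/
lemma case3 [NeZero (2*n)] (hn : 2 ≤ n) (R : Multiset (ZMod 2 × ZMod (2*n)))
    (hnd : (R.map (cl n)).Nodup) (hcard : card R = 2*n + 2) :
    ∃ T ≤ R, Good T ∧ card T = 4*(n/2) := by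
  classical
  choose f hf1 hf2 using fun g => cl_coverage hn R hnd hcard g
  have hinj : ∀ (ε ε' : ZMod 2) (v w : ℕ), v < n → w < n →
      f (ε, (v:ZMod (2*n))) = f (ε', (w:ZMod (2*n))) → ε = ε' ∧ v = w := by
    intro ε ε' v w hv hw heq
    have h : cl n ((ε, (v:ZMod (2*n))) : ZMod 2 × ZMod (2*n)) = cl n (ε', (w:ZMod (2*n))) := by
      rw [← hf2 (ε, (v:ZMod (2*n))), ← hf2 (ε', (w:ZMod (2*n))), heq]
    rcases (cl_eq_iff hn _ _).1 h with he | he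
    · have hε : ε = ε' := congrArg Prod.fst he
      have hval : (v : ZMod (2*n)) = (w : ZMod (2*n)) := congrArg Prod.snd he
      have : v = w := by
        have h1 := congrArg ZMod.val hval
        rwa [ZMod.val_cast_of_lt (by omega), ZMod.val_cast_of_lt (by omega)] at h1
      exact ⟨hε, this⟩
    · have hε : ε = -ε' := congrArg Prod.fst he
      have hval : (v : ZMod (2*n)) = -(w : ZMod (2*n)) := congrArg Prod.snd he
      have hsum : ((v + w : ℕ) : ZMod (2*n)) = 0 := by
        push_cast
        rw [hval]; ring
      have hdvd : 2*n ∣ v + w := (ZMod.natCast_eq_zero_iff _ _).1 hsum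
      have hvw : v = 0 ∧ w = 0 := by
        rcases hdvd with ⟨c, hc⟩
        match c, hc with
        | 0, hc => omega
        | (c+1), hc =>
          exfalso
          have h2 : 2*n ≤ 2*n*(c+1) := Nat.le_mul_of_pos_right _ (Nat.succ_pos c)
          omega
      refine ⟨by rw [hε, neg_zmod2], by omega⟩
  set q := n / 2 with hq
  -- enumeration function
  set EV : ℕ → ZMod 2 × ZMod (2*n) :=
    fun m => f ((if m % 2 = 0 then (0:ZMod 2) else 1), ((m/2 : ℕ) : ZMod (2*n))) with hEV
  have hEVinj : ∀ m m', m < 4*q → m' < 4*q → EV m = EV m' → m = m' := by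
    intro m m' hm hm' he
    simp only [hEV] at he
    have := hinj _ _ (m/2) (m'/2) (by omega) (by omega) he
    obtain ⟨h1, h2⟩ := this
    by_cases p1 : m % 2 = 0 <;> by_cases p2 : m' % 2 = 0 <;>
      simp [p1, p2] at h1 ⊢ <;> omega
  have hEVR : ∀ m, EV m ∈ R := fun m => hf1 _
  set T : Multiset (ZMod 2 × ZMod (2*n)) := (Multiset.range (4*q)).map EV with hT
  have hTR : T ≤ R := by
    apply le_of_nodup_subset
    · refine Multiset.Nodup.map_on ?_ (Multiset.nodup_range _)
      intro x hx y hy hxy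
      exact hEVinj x y (Multiset.mem_range.1 hx) (Multiset.mem_range.1 hy) hxy
    · intro x hx
      obtain ⟨m, -, rfl⟩ := Multiset.mem_map.1 hx
      exact hEVR m
  have hTcard : card T = 4*q := by rw [hT, card_map, Multiset.card_range]
  -- regroup T into quads
  set QD : ℕ → Multiset (ZMod 2 × ZMod (2*n)) :=
    fun j => {f (0, ((2*j : ℕ) : ZMod (2*n)))} + {f (1, ((2*j+1 : ℕ) : ZMod (2*n)))} +
      {f (1, ((2*j : ℕ) : ZMod (2*n)))} + {f (0, ((2*j+1 : ℕ) : ZMod (2*n)))} with hQD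
  have hgroup : ∀ Q : ℕ, (Multiset.range (4*Q)).map EV = ((Multiset.range Q).map QD).sum := by
    intro Q
    induction Q with
    | zero => simp
    | succ Q ihQ =>
      have e0 : EV (4*Q) = f (0, ((2*Q : ℕ) : ZMod (2*n))) := by
        simp only [hEV]
        have h1 : (4*Q) % 2 = 0 := by omega
        have h2 : (4*Q) / 2 = 2*Q := by omega
        rw [h1, h2]
        simp
      have e1 : EV (4*Q+1) = f (1, ((2*Q : ℕ) : ZMod (2*n))) := by
        simp only [hEV]
        have h1 : (4*Q+1) % 2 = 1 := by omega
        have h2 : (4*Q+1) / 2 = 2*Q := by omega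
        rw [h1, h2]
        simp
      have e2 : EV (4*Q+1+1) = f (0, ((2*Q+1 : ℕ) : ZMod (2*n))) := by
        simp only [hEV]
        have h1 : (4*Q+1+1) % 2 = 0 := by omega
        have h2 : (4*Q+1+1) / 2 = 2*Q+1 := by omega
        rw [h1, h2]
        simp
      have e3 : EV (4*Q+1+1+1) = f (1, ((2*Q+1 : ℕ) : ZMod (2*n))) := by
        simp only [hEV]
        have h1 : (4*Q+1+1+1) % 2 = 1 := by omega
        have h2 : (4*Q+1+1+1) / 2 = 2*Q+1 := by omega
        rw [h1, h2]
        simp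
      rw [show 4*(Q+1) = 4*Q+1+1+1+1 from by ring]
      simp only [Multiset.range_succ, Multiset.map_cons, Multiset.sum_cons]
      rw [ihQ, e0, e1, e2, e3, hQD]
      simp only [Multiset.singleton_add, Multiset.cons_add, zero_add]
      ext a
      simp only [Multiset.count_cons, Multiset.count_add]
      ring
  have hTgood : Good T := by
    rw [hT, hgroup q]
    apply Good.sum
    intro p hp
    obtain ⟨j, -, rfl⟩ := Multiset.mem_map.1 hp
    rw [hQD]
    exact good_quad_flex hn _ _ (hf2 _) (hf2 _) (hf2 _) (hf2 _)
  exact ⟨T, hTR, hTgood, hTcard⟩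


lemma sum_two_pow_lt {k : ℕ} {I : Finset ℕ} (h : I ⊆ Finset.range k) :
    ∑ i ∈ I, 2^i < 2^k := by
  induction k generalizing I with
  | zero =>
    rw [Finset.range_zero, Finset.subset_empty] at h
    simp [h]
  | succ k ih =>
    by_cases hk : k ∈ I
    · have h1 : I.erase k ⊆ Finset.range k := by
        intro x hx
        have h2 := h (Finset.erase_subset _ _ hx)
        rw [Finset.mem_range] at h2 ⊢
        have := Finset.ne_of_mem_erase hx
        omega
      have h2 := ih h1
      have h3 : ∑ i ∈ I, 2^i = 2^k + ∑ i ∈ I.erase k, 2^i :=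
        (Finset.add_sum_erase _ _ hk).symm
      rw [h3]
      rw [pow_succ]
      omega
    · have h1 : I ⊆ Finset.range k := by
        intro x hx
        have h2 := h hx
        rw [Finset.mem_range] at h2 ⊢
        rcases Nat.lt_or_ge x k with h | h
        · exact h
        · exfalso; have : x = k := by omega
          exact hk (this ▸ hx)
      have := ih h1
      have : (2:ℕ)^k ≤ 2^(k+1) := by rw [pow_succ]; omega
      omega

lemma pow_sum_inj : ∀ (k : ℕ) (I J : Finset ℕ), I ⊆ Finset.range k → J ⊆ Finset.range k →
    (∑ i ∈ I, 2^i) = (∑ i ∈ J, 2^i) → I = J := by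
  intro k
  induction k with
  | zero =>
    intro I J hI hJ _
    rw [Finset.range_zero, Finset.subset_empty] at hI hJ
    rw [hI, hJ]
  | succ k ih =>
    intro I J hI hJ hsum
    have hsubrange : ∀ (K : Finset ℕ), K ⊆ Finset.range (k+1) → k ∉ K → K ⊆ Finset.range k := by
      intro K hK hk x hx
      have := hK hx
      rw [Finset.mem_range] at this ⊢
      rcases Nat.lt_or_ge x k with h | h
      · exact h
      · exfalso; have : x = k := by omega
        exact hk (this ▸ hx)
    have herase : ∀ (K : Finset ℕ), K ⊆ Finset.range (k+1) → K.erase k ⊆ Finset.range k := by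
      intro K hK x hx
      have h2 := hK (Finset.erase_subset _ _ hx)
      rw [Finset.mem_range] at h2 ⊢
      have := Finset.ne_of_mem_erase hx
      omega
    by_cases hkI : k ∈ I <;> by_cases hkJ : k ∈ J
    · have h1 : ∑ i ∈ I, 2^i = 2^k + ∑ i ∈ I.erase k, 2^i := (Finset.add_sum_erase _ _ hkI).symm
      have h2 : ∑ i ∈ J, 2^i = 2^k + ∑ i ∈ J.erase k, 2^i := (Finset.add_sum_erase _ _ hkJ).symm
      have h3 := ih (I.erase k) (J.erase k) (herase I hI) (herase J hJ) (by omega)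
      rw [← Finset.insert_erase hkI, ← Finset.insert_erase hkJ, h3]
    · exfalso
      have h1 : ∑ i ∈ I, 2^i = 2^k + ∑ i ∈ I.erase k, 2^i := (Finset.add_sum_erase _ _ hkI).symm
      have h2 := sum_two_pow_lt (hsubrange J hJ hkJ)
      omega
    · exfalso
      have h1 : ∑ i ∈ J, 2^i = 2^k + ∑ i ∈ J.erase k, 2^i := (Finset.add_sum_erase _ _ hkJ).symm
      have h2 := sum_two_pow_lt (hsubrange I hI hkI)
      omega
    · exact ih I J (hsubrange I hI hkI) (hsubrange J hJ hkJ) hsum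


lemma card_sum_blocks {Bl' Bl : Multiset (Multiset (ZMod 2 × ZMod (2*n)))}
    (h : Bl' ≤ Bl) (hBl : ∀ p ∈ Bl, Good p ∧ card p = 2) :
    card Bl'.sum = 2 * card Bl' := by
  rw [card_msum]
  have h2 : Bl'.map card = Bl'.map (fun _ => 2) :=
    Multiset.map_congr rfl (fun p hp => (hBl p (Multiset.mem_of_le h hp)).2)
  rw [h2, Multiset.map_const', Multiset.sum_replicate, smul_eq_mul, mul_comm]

theorem upper [NeZero (2*n)] (hn : 2 ≤ n) (S : Multiset (ZMod 2 × ZMod (2*n)))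
    (hS : 2*n + Nat.log 2 (2*n) + 1 ≤ card S) :
    ∃ T ≤ S, card T = 2*n ∧ Good T := by
  classical
  set k := Nat.log 2 (2*n) with hk
  have hk2 : 2 ≤ k :=
    (Nat.le_log_iff_pow_le (by norm_num) (show 2*n ≠ 0 by omega)).2 (show 2^2 ≤ 2*n by omega)
  obtain ⟨S', hS'le, hS'card⟩ := exists_le_card S (2*n+k+1) hS
  suffices h : ∃ T ≤ S', card T = 2*n ∧ Good T by
    obtain ⟨T, h1, h2, h3⟩ := h
    exact ⟨T, le_trans h1 hS'le, h2, h3⟩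
  obtain ⟨Bl, R, hdec, hBl, hnd⟩ := decomp hn S'
  set B := card Bl with hB
  have hsum2 : card Bl.sum = 2*B := card_sum_blocks (le_refl Bl) hBl
  have hcards : 2*B + card R = 2*n + k + 1 := by
    have h1 := congrArg card hdec
    rw [card_add, hsum2, hS'card] at h1
    omega
  by_cases hBn : n ≤ B
  · obtain ⟨Bl', hBl'le, hBl'card⟩ := exists_le_card Bl n hBn
    refine ⟨Bl'.sum, ?_, ?_, Good.sum (fun p hp => (hBl p (Multiset.mem_of_le hBl'le hp)).1)⟩
    · calc Bl'.sum ≤ Bl.sum := sum_le_sum_of_le hBl'le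
        _ ≤ Bl.sum + R := Multiset.le_add_right _ _
        _ = S' := hdec.symm
    · rw [card_sum_blocks hBl'le hBl, hBl'card]
  · have hRbound : card R ≤ 2*n + 2 := nodup_cl_card_le hn R hnd
    by_cases hcase : 2*((k+1)/2) ≤ 2*B
    · -- middle case : greedy pieces + filler blocks
      obtain ⟨U, hUR, hUgood, hUeven, hUlo, hUhi⟩ :=
        lemC hn (2*(n-B)) ⟨n-B, by ring⟩ R (by rw [← hk]; omega)
      have hUmod := Nat.even_iff.1 hUeven
      set fnum := (2*n - card U)/2 with hf
      obtain ⟨Bl', hBl'le, hBl'card⟩ := exists_le_card Bl fnum (by omega)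
      refine ⟨U + Bl'.sum, ?_, ?_,
        hUgood.add (Good.sum fun p hp => (hBl p (Multiset.mem_of_le hBl'le hp)).1)⟩
      · rw [hdec, add_comm Bl.sum R]
        exact add_le_add hUR (sum_le_sum_of_le hBl'le)
      · rw [card_add, card_sum_blocks hBl'le hBl, hBl'card]
        omega
    · -- corner case
      have hB1 : 2*B = k - 1 ∧ 1 ≤ B := by omega
      have hRcard : card R = 2*n + 2 := by omega
      obtain ⟨T3, hT3R, hT3good, hT3card⟩ := case3 hn R hnd hRcard
      set fnum := n - 2*(n/2) with hf
      obtain ⟨Bl', hBl'le, hBl'card⟩ := exists_le_card Bl fnum (by omega)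
      refine ⟨T3 + Bl'.sum, ?_, ?_,
        hT3good.add (Good.sum fun p hp => (hBl p (Multiset.mem_of_le hBl'le hp)).1)⟩
      · rw [hdec, add_comm Bl.sum R]
        exact add_le_add hT3R (sum_le_sum_of_le hBl'le)
      · rw [card_add, card_sum_blocks hBl'le hBl, hBl'card, hT3card]
        omega

/-- The extremal sequence of length `2n + k`. -/
lemma lower (hn : 2 ≤ n) : ∃ S₀ : Multiset (ZMod 2 × ZMod (2*n)),
    card S₀ = 2*n + Nat.log 2 (2*n) ∧
    ¬ ∃ T ≤ S₀, card T = 2*n ∧ ∃ A B, T = A + B ∧ A.sum = B.sum := by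
  classical
  haveI : NeZero (2*n) := ⟨by omega⟩
  set k := Nat.log 2 (2*n) with hk
  have hk2 : 2 ≤ k :=
    (Nat.le_log_iff_pow_le (by norm_num) (show 2*n ≠ 0 by omega)).2 (show 2^2 ≤ 2*n by omega)
  have h2k : 2^k ≤ 2*n := Nat.pow_log_le_self 2 (by omega)
  have hpow_lt : ∀ i, i < k → 2^i < 2*n := fun i hi =>
    lt_of_lt_of_le (Nat.pow_lt_pow_right (by norm_num) hi) h2k
  set pf : ℕ → ZMod 2 × ZMod (2*n) := fun i => ((0:ZMod 2), ((2^i : ℕ) : ZMod (2*n))) with hpf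
  set e1 : ZMod 2 × ZMod (2*n) := ((1:ZMod 2), (0:ZMod (2*n))) with he1
  set W : Multiset (ZMod 2 × ZMod (2*n)) := e1 ::ₘ (Multiset.range k).map pf with hW
  set S₀ : Multiset (ZMod 2 × ZMod (2*n)) := Multiset.replicate (2*n-1) 0 + W with hS₀
  have hpf_ne : ∀ i, i < k → pf i ≠ 0 := by
    intro i hi h0
    have h2 : ((2^i : ℕ) : ZMod (2*n)) = 0 := congrArg Prod.snd h0
    have h3 := congrArg ZMod.val h2
    rw [ZMod.val_cast_of_lt (hpow_lt i hi), ZMod.val_zero] at h3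
    have : (0:ℕ) < 2^i := Nat.pow_pos (by norm_num)
    omega
  have he1_ne : e1 ≠ 0 := by
    intro h0
    have : (1 : ZMod 2) = 0 := congrArg Prod.fst h0
    exact one_ne_zero this
  have hWmem : ∀ x ∈ W, x = e1 ∨ ∃ i, i < k ∧ x = pf i := by
    intro x hx
    rcases Multiset.mem_cons.1 hx with h | h
    · exact Or.inl h
    · obtain ⟨i, hi, rfl⟩ := Multiset.mem_map.1 h
      exact Or.inr ⟨i, Multiset.mem_range.1 hi, rfl⟩
  have hWnd : W.Nodup := by
    rw [hW]
    refine Multiset.nodup_cons.2 ⟨?_, ?_⟩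
    · intro hmem
      obtain ⟨i, hi, hieq⟩ := Multiset.mem_map.1 hmem
      have : (1 : ZMod 2) = 0 := (congrArg Prod.fst hieq).symm
      exact one_ne_zero this
    · refine Multiset.Nodup.map_on ?_ (Multiset.nodup_range k)
      intro i hi j hj hij
      have h2 : ((2^i : ℕ) : ZMod (2*n)) = ((2^j : ℕ) : ZMod (2*n)) := congrArg Prod.snd hij
      have h3 := congrArg ZMod.val h2
      rw [ZMod.val_cast_of_lt (hpow_lt i (Multiset.mem_range.1 hi)),
        ZMod.val_cast_of_lt (hpow_lt j (Multiset.mem_range.1 hj))] at h3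
      exact Nat.pow_right_injective (le_refl 2) h3
  have hcardS₀ : card S₀ = 2*n + k := by
    rw [hS₀, card_add, Multiset.card_replicate, hW, Multiset.card_cons, card_map,
      Multiset.card_range]
    omega
  refine ⟨S₀, hcardS₀, ?_⟩
  rintro ⟨T, hTS, hTcard, A, B, hTAB, hsum⟩
  set P : (ZMod 2 × ZMod (2*n)) → Prop := fun x => x ≠ 0 with hP
  have hfW : W.filter P = W := Multiset.filter_eq_self.2 (by
    intro a ha
    rcases hWmem a ha with rfl | ⟨i, hi, rfl⟩
    · exact he1_ne
    · exact hpf_ne i hi)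
  have hfS₀ : S₀.filter P = W := by
    rw [hS₀, Multiset.filter_add, hfW, Multiset.filter_eq_nil.2 (fun a ha => by
      rw [Multiset.eq_of_mem_replicate ha]; simp [hP]), zero_add]
  set A' := A.filter P with hA'
  set B' := B.filter P with hB'
  set T' := T.filter P with hT'def
  have hT' : T' = A' + B' := by rw [hT'def, hTAB, Multiset.filter_add]
  have hT'W : T' ≤ W := hfS₀ ▸ Multiset.filter_le_filter P hTS
  have hsumfil : ∀ C : Multiset (ZMod 2 × ZMod (2*n)), (C.filter P).sum = C.sum := by
    intro C
    conv_rhs => rw [← Multiset.filter_add_not P C]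
    rw [Multiset.sum_add, Multiset.sum_eq_zero (s := C.filter (fun a => ¬ P a)) (by
      intro x hx
      have := Multiset.of_mem_filter hx
      simpa [hP] using this), add_zero]
  have hsum' : A'.sum = B'.sum := by rw [hA', hB', hsumfil, hsumfil, hsum]
  -- T' is nonempty
  have hcardW : card W = k + 1 := by
    rw [hW, Multiset.card_cons, card_map, Multiset.card_range]
  have hA1 : card (T.filter (fun a => ¬ P a)) ≤ 2*n - 1 := by
    have hle := card_le_card (Multiset.filter_le_filter (fun a => ¬ P a) hTS)
    have hsplit := congrArg card (Multiset.filter_add_not P S₀)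
    rw [card_add, hfS₀, hcardW, hcardS₀] at hsplit
    omega
  have hA2 := congrArg card (Multiset.filter_add_not P T)
  rw [card_add, hTcard] at hA2
  have hT'card : 1 ≤ card T' := by rw [hT'def]; omega
  obtain ⟨x₀, hx₀⟩ := Multiset.exists_mem_of_ne_zero (s := T') (by
    intro h0
    rw [h0] at hT'card
    simp at hT'card)
  -- finsets
  have hndT' : T'.Nodup := Multiset.nodup_of_le hT'W hWnd
  have hndAB := hT' ▸ hndT'
  obtain ⟨ndA', ndB', hdisj⟩ := Multiset.nodup_add.1 hndAB
  set FA := A'.toFinset with hFA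
  set FB := B'.toFinset with hFB
  have hFAval : FA.val = A' := by rw [hFA, Multiset.toFinset_val, Multiset.dedup_eq_self.2 ndA']
  have hFBval : FB.val = B' := by rw [hFB, Multiset.toFinset_val, Multiset.dedup_eq_self.2 ndB']
  have hFAsum : ∑ x ∈ FA, x = A'.sum := by
    rw [Finset.sum_eq_multiset_sum, hFAval, Multiset.map_id']
  have hFBsum : ∑ x ∈ FB, x = B'.sum := by
    rw [Finset.sum_eq_multiset_sum, hFBval, Multiset.map_id']
  have hFsum : ∑ x ∈ FA, x = ∑ x ∈ FB, x := by rw [hFAsum, hFBsum, hsum']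
  have hdisjF : Disjoint FA FB := by
    rw [Finset.disjoint_left]
    intro a haA haB
    exact Multiset.disjoint_left.1 hdisj (Multiset.mem_toFinset.1 haA) (Multiset.mem_toFinset.1 haB)
  have hmemW : ∀ x, (x ∈ FA ∨ x ∈ FB) → x ∈ W := by
    rintro x (hx | hx)
    · exact Multiset.mem_of_le hT'W (hT' ▸ Multiset.mem_of_le (Multiset.le_add_right _ _)
        (Multiset.mem_toFinset.1 hx))
    · exact Multiset.mem_of_le hT'W (hT' ▸ Multiset.mem_of_le (Multiset.le_add_left _ _)
        (Multiset.mem_toFinset.1 hx))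
  -- first coordinate: e1 is in neither
  have hfst : ∀ F : Finset (ZMod 2 × ZMod (2*n)), (∀ x ∈ F, x ∈ W) →
      ∑ x ∈ F, x.1 = (if e1 ∈ F then (1:ZMod 2) else 0) := by
    intro F hF
    by_cases hm : e1 ∈ F
    · rw [if_pos hm]
      rw [Finset.sum_eq_single_of_mem e1 hm (fun b hb hbne => by
        rcases hWmem b (hF b hb) with rfl | ⟨i, hi, rfl⟩
        · exact absurd rfl hbne
        · rfl)]
    · rw [if_neg hm]
      apply Finset.sum_eq_zero
      intro b hb
      rcases hWmem b (hF b hb) with rfl | ⟨i, hi, rfl⟩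
      · exact absurd hb hm
      · rfl
  have hfst_eq : (if e1 ∈ FA then (1:ZMod 2) else 0) = (if e1 ∈ FB then (1:ZMod 2) else 0) := by
    rw [← hfst FA (fun x hx => hmemW x (Or.inl hx)), ← hfst FB (fun x hx => hmemW x (Or.inr hx)),
      ← Prod.fst_sum, ← Prod.fst_sum, hFsum]
  have h10 : e1 ∉ FA ∧ e1 ∉ FB := by
    by_cases hA : e1 ∈ FA <;> by_cases hB : e1 ∈ FB
    · exact absurd hB (Finset.disjoint_left.1 hdisjF hA)
    · rw [if_pos hA, if_neg hB] at hfst_eq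
      exact absurd hfst_eq one_ne_zero
    · rw [if_neg hA, if_pos hB] at hfst_eq
      exact absurd hfst_eq.symm one_ne_zero
    · exact ⟨hA, hB⟩
  -- so everything lives in the powers
  have hmempow : ∀ x, (x ∈ FA ∨ x ∈ FB) → ∃ i, i < k ∧ x = pf i := by
    intro x hx
    rcases hWmem x (hmemW x hx) with rfl | h
    · rcases hx with hx | hx
      · exact absurd hx h10.1
      · exact absurd hx h10.2
    · exact h
  set IA := (Finset.range k).filter (fun i => pf i ∈ FA) with hIA
  set IB := (Finset.range k).filter (fun i => pf i ∈ FB) with hIB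
  have hpfinj : ∀ i ∈ Finset.range k, ∀ j ∈ Finset.range k, pf i = pf j → i = j := by
    intro i hi j hj hij
    have h2 : ((2^i : ℕ) : ZMod (2*n)) = ((2^j : ℕ) : ZMod (2*n)) := congrArg Prod.snd hij
    have h3 := congrArg ZMod.val h2
    rw [ZMod.val_cast_of_lt (hpow_lt i (Finset.mem_range.1 hi)),
      ZMod.val_cast_of_lt (hpow_lt j (Finset.mem_range.1 hj))] at h3
    exact Nat.pow_right_injective (le_refl 2) h3
  have hFAimg : FA = Finset.image pf IA := by
    ext x
    constructor
    · intro hx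
      obtain ⟨i, hi, rfl⟩ := hmempow x (Or.inl hx)
      exact Finset.mem_image.2 ⟨i, Finset.mem_filter.2 ⟨Finset.mem_range.2 hi, hx⟩, rfl⟩
    · intro hx
      obtain ⟨i, hi, rfl⟩ := Finset.mem_image.1 hx
      exact (Finset.mem_filter.1 hi).2
  have hFBimg : FB = Finset.image pf IB := by
    ext x
    constructor
    · intro hx
      obtain ⟨i, hi, rfl⟩ := hmempow x (Or.inr hx)
      exact Finset.mem_image.2 ⟨i, Finset.mem_filter.2 ⟨Finset.mem_range.2 hi, hx⟩, rfl⟩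
    · intro hx
      obtain ⟨i, hi, rfl⟩ := Finset.mem_image.1 hx
      exact (Finset.mem_filter.1 hi).2
  have hsndA : ∑ x ∈ FA, x.2 = ((∑ i ∈ IA, 2^i : ℕ) : ZMod (2*n)) := by
    rw [hFAimg, Finset.sum_image (fun i hi j hj h =>
      hpfinj i (Finset.filter_subset _ _ hi) j (Finset.filter_subset _ _ hj) h), Nat.cast_sum]
  have hsndB : ∑ x ∈ FB, x.2 = ((∑ i ∈ IB, 2^i : ℕ) : ZMod (2*n)) := by
    rw [hFBimg, Finset.sum_image (fun i hi j hj h =>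
      hpfinj i (Finset.filter_subset _ _ hi) j (Finset.filter_subset _ _ hj) h), Nat.cast_sum]
  have hsnd_eq : ((∑ i ∈ IA, 2^i : ℕ) : ZMod (2*n)) = ((∑ i ∈ IB, 2^i : ℕ) : ZMod (2*n)) := by
    rw [← hsndA, ← hsndB, ← Prod.snd_sum, ← Prod.snd_sum, hFsum]
  have hIAlt : ∑ i ∈ IA, 2^i < 2*n :=
    lt_of_lt_of_le (sum_two_pow_lt (Finset.filter_subset _ _)) h2k
  have hIBlt : ∑ i ∈ IB, 2^i < 2*n :=
    lt_of_lt_of_le (sum_two_pow_lt (Finset.filter_subset _ _)) h2k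
  have hnat : ∑ i ∈ IA, 2^i = ∑ i ∈ IB, 2^i := by
    have h3 := congrArg ZMod.val hsnd_eq
    rwa [ZMod.val_cast_of_lt hIAlt, ZMod.val_cast_of_lt hIBlt] at h3
  have hIeq : IA = IB :=
    pow_sum_inj k IA IB (Finset.filter_subset _ _) (Finset.filter_subset _ _) hnat
  have hIdisj : Disjoint IA IB := by
    rw [Finset.disjoint_left]
    intro i hiA hiB
    exact Finset.disjoint_left.1 hdisjF (Finset.mem_filter.1 hiA).2 (Finset.mem_filter.1 hiB).2
  have hIempty : IA = ∅ := disjoint_self.1 (hIeq ▸ hIdisj)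
  -- but T' is nonempty: contradiction
  rcases Multiset.mem_add.1 (hT' ▸ hx₀) with hx | hx
  · have : x₀ ∈ FA := Multiset.mem_toFinset.2 hx
    rw [hFAimg, hIempty] at this
    simp at this
  · have : x₀ ∈ FB := Multiset.mem_toFinset.2 hx
    rw [hFBimg, ← hIeq, hIempty] at this
    simp at this


end EGZaux

/-- The plus-minus weighted Erdős–Ginzburg–Ziv constant of `C₂ ⊕ C₂ₙ`:
the smallest `ℓ` such that every sequence (multiset) over `ZMod 2 × ZMod (2n)`
of length at least `ℓ` has a subsequence of length `2n` (= the exponent)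
admitting a plus-minus weighted zero-sum; a `±1`-weighted zero-sum of `T`
is a partition `T = A + B` with `A.sum = B.sum`. -/
noncomputable def egzPM (n : ℕ) : ℕ :=
  sInf {ℓ : ℕ | ∀ S : Multiset (ZMod 2 × ZMod (2 * n)), ℓ ≤ Multiset.card S →
    ∃ T ≤ S, Multiset.card T = 2 * n ∧ ∃ A B, T = A + B ∧ A.sum = B.sum}

theorem stmt_18 (n : ℕ) (hn : 2 ≤ n) :
    egzPM n = 2 * n + Nat.log 2 (2 * n) + 1 := by
  haveI : NeZero (2*n) := ⟨by omega⟩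
  have hmem : (2 * n + Nat.log 2 (2 * n) + 1) ∈ {ℓ : ℕ |
      ∀ S : Multiset (ZMod 2 × ZMod (2 * n)), ℓ ≤ Multiset.card S →
      ∃ T ≤ S, Multiset.card T = 2 * n ∧ ∃ A B, T = A + B ∧ A.sum = B.sum} := by
    intro S hS
    obtain ⟨T, h1, h2, h3⟩ := EGZaux.upper hn S hS
    exact ⟨T, h1, h2, h3⟩
  have hlb : ∀ ℓ ∈ {ℓ : ℕ |
      ∀ S : Multiset (ZMod 2 × ZMod (2 * n)), ℓ ≤ Multiset.card S →
      ∃ T ≤ S, Multiset.card T = 2 * n ∧ ∃ A B, T = A + B ∧ A.sum = B.sum},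
      2 * n + Nat.log 2 (2 * n) + 1 ≤ ℓ := by
    intro ℓ hℓ
    by_contra hcon
    push_neg at hcon
    obtain ⟨S₀, hc, hno⟩ := EGZaux.lower hn
    exact hno (hℓ S₀ (by omega))
  exact le_antisymm (Nat.sInf_le hmem) (le_csInf ⟨_, hmem⟩ hlb)
end

section
/- Let G = C_{n_1} ⊕ ⋯ ⊕ C_{n_r} with 1 < n_1 | n_2 | ⋯ | n_r. Then the plus-minus weighted Davenport constant D_±(G) satisfies ∑_{i=1}^r ⌊log₂ n_i⌋ + 1 ≤ D_±(G) ≤ ⌊log₂|G|⌋ + 1. -/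
lemma sum_two_pow_bound (k : ℕ) (c : ℕ → ℕ) (hc : ∀ j, c j ≤ 1) :
    ∑ j ∈ Finset.range k, c j * 2 ^ j < 2 ^ k := by
  induction k with
  | zero => simp
  | succ k ih =>
    rw [Finset.sum_range_succ, pow_succ]
    have := hc k
    nlinarith [pow_pos (show 0 < 2 by norm_num) k]

lemma digit_lemma (k : ℕ) (a b : ℕ → ℕ) (ha : ∀ j, a j ≤ 1) (hb : ∀ j, b j ≤ 1)
    (hs : ∑ j ∈ Finset.range k, a j * 2 ^ j = ∑ j ∈ Finset.range k, b j * 2 ^ j) :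
    ∀ j < k, a j = b j := by
  induction k with
  | zero => omega
  | succ k ih =>
    rw [Finset.sum_range_succ, Finset.sum_range_succ] at hs
    have bA := sum_two_pow_bound k a ha
    have bB := sum_two_pow_bound k b hb
    have hak := ha k
    have hbk := hb k
    have htop : a k = b k := by
      rcases Nat.le_one_iff_eq_zero_or_eq_one.mp hak with h1 | h1 <;>
      rcases Nat.le_one_iff_eq_zero_or_eq_one.mp hbk with h2 | h2 <;>
        simp [h1, h2] at hs ⊢ <;> omega
    have hs' : ∑ j ∈ Finset.range k, a j * 2 ^ j = ∑ j ∈ Finset.range k, b j * 2 ^ j := by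
      rw [htop] at hs; omega
    intro j hj
    rcases Nat.lt_succ_iff_lt_or_eq.mp hj with h | h
    · exact ih hs' j h
    · rw [h]; exact htop

lemma multiset_sum_count_formula {ι M : Type*} [DecidableEq ι] [DecidableEq M] [AddCommMonoid M]
    (s : Finset ι) (e : ι → M) (he : Set.InjOn e s)
    (A : Multiset M) (hA : A ≤ (s.val.map e)) :
    A.sum = ∑ σ ∈ s, A.count (e σ) • e σ := by
  rw [Finset.sum_multiset_count A]
  have hsub : A.toFinset ⊆ s.image e := by
    intro x hx
    have : x ∈ s.val.map e := Multiset.mem_of_le hA (Multiset.mem_toFinset.mp hx)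
    obtain ⟨σ, hσ, rfl⟩ := Multiset.mem_map.mp this
    exact Finset.mem_image.mpr ⟨σ, hσ, rfl⟩
  rw [Finset.sum_subset hsub, Finset.sum_image (fun x hx y hy h => he hx hy h)]
  intro x _ hx
  rw [Multiset.count_eq_zero_of_notMem (fun h => hx (Multiset.mem_toFinset.mpr h)), zero_smul]

lemma lower_bad (r : ℕ) (nn : Fin r → ℕ) (hone : ∀ i, 1 < nn i) :
    ∃ S₀ : Multiset ((i : Fin r) → ZMod (nn i)),
      Multiset.card S₀ = ∑ i, Nat.log 2 (nn i) ∧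
      ∀ T ≤ S₀, T ≠ 0 → ∀ A B, T = A + B → A.sum ≠ B.sum := by
  classical
  set k : Fin r → ℕ := fun i => Nat.log 2 (nn i) with hk
  have hnz : ∀ i, nn i ≠ 0 := fun i => by have := hone i; omega
  haveI : ∀ i, NeZero (nn i) := fun i => ⟨hnz i⟩
  have hpow : ∀ i, ∀ j < k i, 0 < 2 ^ j ∧ 2 ^ j < nn i := by
    intro i j hj
    refine ⟨pow_pos (by norm_num) j, ?_⟩
    calc 2 ^ j < 2 ^ (k i) := Nat.pow_lt_pow_right one_lt_two hj
      _ ≤ nn i := Nat.pow_log_le_self 2 (hnz i)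
  set D : Finset ((_ : Fin r) × ℕ) := Finset.univ.sigma (fun i => Finset.range (k i)) with hD
  set e : ((_ : Fin r) × ℕ) → ((i : Fin r) → ZMod (nn i)) :=
    fun σ => Pi.single σ.1 ((2 ^ σ.2 : ℕ) : ZMod (nn σ.1)) with he
  have hmemD : ∀ σ : ((_ : Fin r) × ℕ), σ ∈ D ↔ σ.2 < k σ.1 := by
    intro σ; simp [hD, Finset.mem_sigma]
  have hne0 : ∀ i, ∀ j < k i, ((2 ^ j : ℕ) : ZMod (nn i)) ≠ 0 := by
    intro i j hj h
    rw [ZMod.natCast_eq_zero_iff] at h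
    have := Nat.le_of_dvd (hpow i j hj).1 h
    have := (hpow i j hj).2
    omega
  have hinj : Set.InjOn e D := by
    rintro ⟨i, j⟩ hi ⟨i', j'⟩ hi' h
    rw [Finset.mem_coe, hmemD] at hi hi'
    simp only at hi hi'
    have hii : i = i' := by
      by_contra hcon
      have := congrFun h i
      rw [he] at this
      simp only [Pi.single_eq_same] at this
      rw [Pi.single_eq_of_ne hcon] at this
      exact hne0 i j hi this
    subst hii
    have := congrFun h i
    simp only [he, Pi.single_eq_same] at this
    have hv := congrArg ZMod.val this
    rw [ZMod.val_cast_of_lt (hpow i j hi).2, ZMod.val_cast_of_lt (hpow i j' hi').2] at hv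
    have : j = j' := Nat.pow_right_injective (le_refl 2) hv
    simp [this]
  refine ⟨D.val.map e, ?_, ?_⟩
  · rw [Multiset.card_map, ← Finset.card_def, Finset.card_sigma]
    simp [hk]
  · intro T hT hT0 A B hTAB hsum
    set S₀ := D.val.map e with hS₀
    have hS₀nodup : S₀.Nodup := Multiset.Nodup.map_on (fun x hx y hy => hinj hx hy) D.nodup
    -- pick an element of T
    obtain ⟨x, hx⟩ := Multiset.exists_mem_of_ne_zero hT0
    obtain ⟨σ₀, hσ₀D, hσ₀x⟩ := Multiset.mem_map.mp (Multiset.mem_of_le hT hx)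
    obtain ⟨i₀, j₀⟩ := σ₀
    have hj₀ : j₀ < k i₀ := (hmemD ⟨i₀, j₀⟩).mp hσ₀D
    set n := nn i₀ with hn
    set K := k i₀ with hK
    have hA : A ≤ S₀ := le_trans (hTAB ▸ Multiset.le_add_right A B) hT
    have hB : B ≤ S₀ := le_trans (hTAB ▸ Multiset.le_add_left B A) hT
    -- counts
    have hcount : ∀ σ ∈ D, A.count (e σ) + B.count (e σ) ≤ 1 := by
      intro σ hσ
      have h1 : T.count (e σ) ≤ S₀.count (e σ) := Multiset.count_le_of_le _ hT
      have h2 : S₀.count (e σ) ≤ 1 := Multiset.nodup_iff_count_le_one.mp hS₀nodup _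
      rw [hTAB, Multiset.count_add] at h1
      omega
    set a : ℕ → ℕ := fun j => if j < K then A.count (e ⟨i₀, j⟩) else 0 with ha
    set b : ℕ → ℕ := fun j => if j < K then B.count (e ⟨i₀, j⟩) else 0 with hb
    have haj : ∀ j, a j ≤ 1 := by
      intro j
      show (if j < K then A.count (e ⟨i₀, j⟩) else 0) ≤ 1
      split
      · have := hcount ⟨i₀, j⟩ ((hmemD _).mpr (by assumption))
        omega
      · omega
    have hbj : ∀ j, b j ≤ 1 := by
      intro j
      show (if j < K then B.count (e ⟨i₀, j⟩) else 0) ≤ 1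
      split
      · have := hcount ⟨i₀, j⟩ ((hmemD _).mpr (by assumption))
        omega
      · omega
    -- coordinate sums
    have hcoord : ∀ (C : Multiset ((i : Fin r) → ZMod (nn i))), C ≤ S₀ →
        ∀ (c : ℕ → ℕ), (∀ j < K, c j = C.count (e ⟨i₀, j⟩)) →
        C.sum i₀ = ((∑ j ∈ Finset.range K, c j * 2 ^ j : ℕ) : ZMod n) := by
      intro C hC c hc
      have h1 : C.sum = ∑ σ ∈ D, C.count (e σ) • e σ :=
        multiset_sum_count_formula D e hinj C hC
      have h2 : C.sum i₀ = ∑ σ ∈ D, C.count (e σ) • (e σ i₀) := by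
        rw [h1]
        rw [Finset.sum_apply]
        apply Finset.sum_congr rfl
        intro σ _
        rfl
      rw [h2, hD, Finset.sum_sigma]
      rw [Finset.sum_eq_single i₀]
      · rw [Nat.cast_sum]
        apply Finset.sum_congr rfl
        intro j hj
        have hjK : j < K := Finset.mem_range.mp hj
        rw [hc j hjK, he]
        simp only [Pi.single_eq_same]
        rw [Nat.cast_mul, nsmul_eq_mul]
      · intro i _ hi
        apply Finset.sum_eq_zero
        intro j _
        rw [he]
        simp only
        rw [Pi.single_eq_of_ne (Ne.symm hi)]
        exact smul_zero _
      · intro h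
        exact absurd (Finset.mem_univ i₀) h
    have hAc : A.sum i₀ = ((∑ j ∈ Finset.range K, a j * 2 ^ j : ℕ) : ZMod n) :=
      hcoord A hA a (fun j hj => by rw [ha]; simp [hj])
    have hBc : B.sum i₀ = ((∑ j ∈ Finset.range K, b j * 2 ^ j : ℕ) : ZMod n) :=
      hcoord B hB b (fun j hj => by rw [hb]; simp [hj])
    have hEq : ((∑ j ∈ Finset.range K, a j * 2 ^ j : ℕ) : ZMod n)
        = ((∑ j ∈ Finset.range K, b j * 2 ^ j : ℕ) : ZMod n) := by
      rw [← hAc, ← hBc, hsum]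
    have hbound : ∀ c : ℕ → ℕ, (∀ j, c j ≤ 1) → ∑ j ∈ Finset.range K, c j * 2 ^ j < n := by
      intro c hc
      calc ∑ j ∈ Finset.range K, c j * 2 ^ j < 2 ^ K := sum_two_pow_bound K c hc
        _ ≤ n := Nat.pow_log_le_self 2 (hnz i₀)
    have hNat : ∑ j ∈ Finset.range K, a j * 2 ^ j = ∑ j ∈ Finset.range K, b j * 2 ^ j := by
      have := congrArg ZMod.val hEq
      rwa [ZMod.val_cast_of_lt (hbound a haj), ZMod.val_cast_of_lt (hbound b hbj)] at this
    have hdig := digit_lemma K a b haj hbj hNat j₀ hj₀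
    -- contradiction at j₀
    have hTc : 1 ≤ T.count (e ⟨i₀, j₀⟩) := by
      rw [← hσ₀x] at hx
      exact Multiset.one_le_count_iff_mem.mpr hx
    rw [hTAB, Multiset.count_add] at hTc
    have hle := hcount ⟨i₀, j₀⟩ hσ₀D
    rw [ha, hb] at hdig
    simp only [hj₀, if_pos] at hdig
    omega

lemma upper_mem (G : Type*) [AddCommGroup G] [Fintype G] [DecidableEq G] :
    (Nat.log 2 (Fintype.card G) + 1) ∈ {ℓ : ℕ | ∀ S : Multiset G, ℓ ≤ Multiset.card S →
      ∃ T ≤ S, T ≠ 0 ∧ ∃ A B, T = A + B ∧ A.sum = B.sum} := by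
  intro S hS
  set ℓ := Nat.log 2 (Fintype.card G) + 1 with hℓ
  set l := S.toList with hl
  have hlen : ℓ ≤ l.length := by rwa [hl, Multiset.length_toList]
  set g : Fin ℓ → G := fun i => l.get (Fin.castLE hlen i) with hg
  have hcard : Fintype.card G < Fintype.card (Finset (Fin ℓ)) := by
    rw [Fintype.card_finset, Fintype.card_fin]
    exact Nat.lt_pow_succ_log_self one_lt_two _
  obtain ⟨F₁, F₂, hne, hfe⟩ :=
    Fintype.exists_ne_map_eq_of_card_lt (fun F : Finset (Fin ℓ) => ∑ i ∈ F, g i) hcard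
  have hsum : ∑ i ∈ F₁ \ F₂, g i = ∑ i ∈ F₂ \ F₁, g i := by
    have h1 := Finset.sum_inter_add_sum_sdiff F₁ F₂ g
    have h2 := Finset.sum_inter_add_sum_sdiff F₂ F₁ g
    rw [Finset.inter_comm] at h2
    simp only [hfe] at h1
    rw [← h2] at h1
    exact add_left_cancel h1
  have key : ∀ F : Finset (Fin ℓ), (F.val.map g) ≤ S := by
    intro F
    have h1 : (F.val.map (Fin.castLE hlen)).Nodup :=
      F.nodup.map (Fin.castLE_injective hlen)
    have h2 : (F.val.map (Fin.castLE hlen)) ≤ ↑(List.finRange l.length) := by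
      refine (Multiset.le_iff_subset h1).mpr ?_
      intro x _
      simp [List.mem_finRange]
    have h3 : F.val.map g ≤ (List.finRange l.length : Multiset _).map l.get := by
      have := Multiset.map_le_map (f := l.get) h2
      rwa [Multiset.map_map] at this
    have h4 : ((List.finRange l.length : Multiset _).map l.get) = S := by
      rw [Multiset.map_coe, List.map_get_finRange, hl, Multiset.coe_toList]
    rwa [h4] at h3
  refine ⟨(F₁ \ F₂).val.map g + (F₂ \ F₁).val.map g, ?_, ?_, _, _, rfl, hsum⟩
  · have hd : Disjoint (F₁ \ F₂) (F₂ \ F₁) := disjoint_sdiff_sdiff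
    have : (F₁ \ F₂).val.map g + (F₂ \ F₁).val.map g
        = ((F₁ \ F₂).disjUnion (F₂ \ F₁) hd).val.map g := by
      rw [show ((F₁ \ F₂).disjUnion (F₂ \ F₁) hd).val = (F₁ \ F₂).val + (F₂ \ F₁).val from rfl,
        Multiset.map_add]
    rw [this]
    exact key _
  · intro h
    have hc := congrArg Multiset.card h
    simp only [Multiset.card_add, Multiset.card_map, Multiset.card_zero] at hc
    rw [← Finset.card_def, ← Finset.card_def] at hc
    have h1 : F₁ \ F₂ = ∅ := Finset.card_eq_zero.mp (by omega)
    have h2 : F₂ \ F₁ = ∅ := Finset.card_eq_zero.mp (by omega)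
    exact hne (Finset.Subset.antisymm (Finset.sdiff_eq_empty_iff_subset.mp h1)
      (Finset.sdiff_eq_empty_iff_subset.mp h2))



/-- The plus-minus weighted Davenport constant of a finite abelian group `G`:
the smallest `ℓ` such that every sequence (multiset) over `G` of length at
least `ℓ` has a non-empty subsequence admitting a plus-minus weighted
zero-sum, i.e. a partition `T = A + B` with `A.sum = B.sum`. -/
noncomputable def davenportPM (G : Type*) [AddCommGroup G] : ℕ :=
  sInf {ℓ : ℕ | ∀ S : Multiset G, ℓ ≤ Multiset.card S →
    ∃ T ≤ S, T ≠ 0 ∧ ∃ A B, T = A + B ∧ A.sum = B.sum}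

theorem stmt_19 (G : Type*) [AddCommGroup G] [Fintype G]
    (r : ℕ) (nn : Fin r → ℕ) (hone : ∀ i, 1 < nn i)
    (hdvd : ∀ i j : Fin r, i ≤ j → nn i ∣ nn j)
    (iso : G ≃+ ((i : Fin r) → ZMod (nn i))) :
    (∑ i, Nat.log 2 (nn i)) + 1 ≤ davenportPM G ∧
      davenportPM G ≤ Nat.log 2 (Fintype.card G) + 1 := by
  classical
  have hup := upper_mem G
  constructor
  · obtain ⟨S₀, hcard, hbad⟩ := lower_bad r nn hone
    set S : Multiset G := S₀.map iso.symm with hS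
    have hScard : Multiset.card S = ∑ i, Nat.log 2 (nn i) := by
      rw [hS, Multiset.card_map, hcard]
    refine le_csInf ⟨_, hup⟩ ?_
    intro ℓ hℓ
    by_contra hcon
    push_neg at hcon
    obtain ⟨T, hT, hT0, A, B, hTAB, hAB⟩ := hℓ S (by omega)
    have hSiso : S.map iso = S₀ := by
      rw [hS, Multiset.map_map]
      simp
    refine hbad (T.map iso) ?_ ?_ (A.map iso) (B.map iso) ?_ ?_
    · rw [← hSiso]
      exact Multiset.map_le_map hT
    · simp [Multiset.map_eq_zero, hT0]
    · rw [hTAB, Multiset.map_add]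
    · rw [← map_multiset_sum, ← map_multiset_sum, hAB]
  · exact Nat.sInf_le hup
end
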